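/- arXiv:0805.3072 — 5 statements merged into one kernel-verified Lean document; each statement's English description precedes it below -/
import Mathlib

section
/- Let A be an n-dimensional complex Zinbiel algebra that is zero-filiform, i.e. dim A^i = (n+1) − i for 1 ≤ i ≤ n+1. Then A is isomorphic to NF_n; equivalently, A has a basis e_1, …, e_n in which e_i∘e_j = C(i+j−1, j)·e_{i+j} whenever 2 ≤ i+j ≤ n and all other products of basis vectors are zero. -/
/-- A complex Zinbiel algebra structure on the module `A`: a bilinear
multiplication satisfying `(x∘y)∘z = x∘(y∘z) + x∘(z∘y)`. -/
structure ZinbielStr (A : Type*) [AddCommGroup A] [Module ℂ A] where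
  mul : A →ₗ[ℂ] A →ₗ[ℂ] A
  zinbiel : ∀ x y z : A, mul (mul x y) z = mul x (mul y z) + mul x (mul z y)

namespace ZinbielStr

variable {A : Type*} [AddCommGroup A] [Module ℂ A]

/-- `M.lcs k` is the term `A^k` of the lower central series for `k ≥ 1`
(`A^1 = A`, `A^{k+1} = span (A ∘ A^k)`), with the convention `M.lcs 0 = ⊤`. -/
def lcs (M : ZinbielStr A) : ℕ → Submodule ℂ A
  | 0 => ⊤
  | 1 => ⊤
  | k + 2 => Submodule.span ℂ {z | ∃ a b, b ∈ lcs M (k + 1) ∧ z = M.mul a b}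

/-- A Zinbiel algebra is nilpotent when some term of the lower central series vanishes. -/
def IsNilpotent (M : ZinbielStr A) : Prop := ∃ s, 1 ≤ s ∧ M.lcs s = ⊥

lemma lcs_succ_succ (M : ZinbielStr A) (k : ℕ) :
    M.lcs (k + 2) = Submodule.span ℂ {z | ∃ a b, b ∈ M.lcs (k + 1) ∧ z = M.mul a b} := rfl

lemma lcs_succ_le (M : ZinbielStr A) : ∀ k, M.lcs (k + 1) ≤ M.lcs k := by
  intro k
  induction k using Nat.strong_induction_on with
  | _ k ih =>
    match k with
    | 0 => exact le_top
    | 1 => exact le_top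
    | (k + 2) =>
      rw [lcs_succ_succ, lcs_succ_succ]
      apply Submodule.span_mono
      rintro z ⟨a, b, hb, rfl⟩
      exact ⟨a, b, ih (k + 1) (by omega) hb, rfl⟩

lemma lcs_le_of_le (M : ZinbielStr A) {m k : ℕ} (h : m ≤ k) : M.lcs k ≤ M.lcs m := by
  induction h with
  | refl => exact le_rfl
  | step h ih => exact le_trans (M.lcs_succ_le _) ih

lemma mul_mem_lcs_succ (M : ZinbielStr A) {j : ℕ} (hj : 1 ≤ j) (x : A) {y : A}
    (hy : y ∈ M.lcs j) : M.mul x y ∈ M.lcs (j + 1) := by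
  match j, hj with
  | (j' + 1), _ =>
    rw [lcs_succ_succ]
    exact Submodule.subset_span ⟨x, y, hy, rfl⟩

lemma mul_mem_lcs (M : ZinbielStr A) :
    ∀ i j, 1 ≤ i → 1 ≤ j → ∀ x ∈ M.lcs i, ∀ y ∈ M.lcs j, M.mul x y ∈ M.lcs (i + j) := by
  suffices H : ∀ s i j, 1 ≤ i → 1 ≤ j → i + j ≤ s →
      ∀ x ∈ M.lcs i, ∀ y ∈ M.lcs j, M.mul x y ∈ M.lcs (i + j) from
    fun i j hi hj => H (i + j) i j hi hj le_rfl
  intro s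
  induction s with
  | zero => intro i j hi hj hs; omega
  | succ s ih =>
    intro i j hi hj hs x hx y hy
    match i, hi with
    | 1, _ =>
      have : (1 : ℕ) + j = j + 1 := by omega
      rw [this]
      exact M.mul_mem_lcs_succ hj x hy
    | (k + 2), _ =>
      rw [lcs_succ_succ] at hx
      induction hx using Submodule.span_induction with
      | mem z hz =>
        obtain ⟨a, b, hb, rfl⟩ := hz
        rw [M.zinbiel a b y]
        have h1 : M.mul b y ∈ M.lcs (k + 1 + j) :=
          ih (k + 1) j (by omega) hj (by omega) b hb y hy
        have h2 : M.mul y b ∈ M.lcs (j + (k + 1)) :=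
          ih j (k + 1) hj (by omega) (by omega) y hy b hb
        have e1 : k + 2 + j = (k + 1 + j) + 1 := by omega
        have e2 : k + 2 + j = (j + (k + 1)) + 1 := by omega
        refine Submodule.add_mem _ ?_ ?_
        · rw [e1]; exact M.mul_mem_lcs_succ (by omega) a h1
        · rw [e2]; exact M.mul_mem_lcs_succ (by omega) a h2
      | zero => simp
      | add u v hu hv hu' hv' => rw [map_add, LinearMap.add_apply]; exact Submodule.add_mem _ hu' hv'
      | smul c u hu hu' => rw [map_smul, LinearMap.smul_apply]; exact Submodule.smul_mem _ _ hu'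

/-- The canonical generators: `gen M x 1 = x`, `gen M x (k+1) = x ∘ gen M x k`. -/
def gen (M : ZinbielStr A) (x : A) : ℕ → A
  | 0 => 0
  | 1 => x
  | (k + 2) => M.mul x (gen M x (k + 1))

lemma gen_succ (M : ZinbielStr A) (x : A) {k : ℕ} (hk : 1 ≤ k) :
    gen M x (k + 1) = M.mul x (gen M x k) := by
  match k, hk with
  | (k' + 1), _ => rfl

lemma gen_mem (M : ZinbielStr A) (x : A) : ∀ k, 1 ≤ k → gen M x k ∈ M.lcs k := by
  intro k
  induction k with
  | zero => omega
  | succ k ih =>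
    intro _
    match k with
    | 0 => exact Submodule.mem_top
    | (k' + 1) =>
      rw [gen_succ M x (by omega : 1 ≤ k' + 1)]
      exact M.mul_mem_lcs_succ (by omega) x (ih (by omega))

lemma gen_mul_gen (M : ZinbielStr A) (x : A) :
    ∀ i, 1 ≤ i → ∀ j, 1 ≤ j →
      M.mul (gen M x i) (gen M x j) =
        (((i + j - 1).choose j : ℕ) : ℂ) • gen M x (i + j) := by
  suffices H : ∀ s i j, 1 ≤ i → 1 ≤ j → i + j ≤ s →
      M.mul (gen M x i) (gen M x j) =
        (((i + j - 1).choose j : ℕ) : ℂ) • gen M x (i + j) from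
    fun i hi j hj => H (i + j) i j hi hj le_rfl
  intro s
  induction s with
  | zero => intro i j hi hj hs; omega
  | succ s ih =>
    intro i j hi hj hs
    match i, hi with
    | 1, _ =>
      have h1 : (1 : ℕ) + j = j + 1 := by omega
      rw [h1]
      have h2 : j + 1 - 1 = j := by omega
      rw [h2, Nat.choose_self, gen_succ M x hj]
      show M.mul x (gen M x j) = ((1 : ℕ) : ℂ) • M.mul x (gen M x j)
      simp
    | (k + 2), _ =>
      have hgen : gen M x (k + 2) = M.mul x (gen M x (k + 1)) := rfl
      rw [hgen, M.zinbiel x (gen M x (k + 1)) (gen M x j)]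
      rw [ih (k + 1) j (by omega) hj (by omega)]
      rw [ih j (k + 1) hj (by omega) (by omega)]
      have e1 : k + 1 + j - 1 = k + j := by omega
      have e2 : j + (k + 1) - 1 = k + j := by omega
      have e3 : j + (k + 1) = k + 1 + j := by omega
      rw [e1, e2, e3, map_smul, map_smul]
      have hx1 : M.mul x (gen M x (k + 1 + j)) = gen M x (k + 1 + j + 1) :=
        (gen_succ M x (by omega)).symm
      rw [hx1]
      have e4 : k + 1 + j + 1 = k + 2 + j := by omega
      rw [e4, ← add_smul]
      congr 1
      have e5 : k + 2 + j - 1 = k + j + 1 := by omega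
      rw [e5]
      have hcs : (k + j).choose (k + 1) = (k + j).choose (j - 1) := by
        have h := Nat.choose_symm (n := k + j) (k := k + 1) (by omega)
        have : k + j - (k + 1) = j - 1 := by omega
        rw [this] at h
        exact h.symm
      rw [hcs]
      match j, hj with
      | (j' + 1), _ =>
        have : j' + 1 - 1 = j' := rfl
        rw [this]
        have hp : (k + (j' + 1) + 1).choose (j' + 1)
            = (k + j' + 1).choose j' + (k + j' + 1).choose (j' + 1) := by
          have : k + (j' + 1) + 1 = (k + j' + 1) + 1 := by omega
          rw [this, Nat.choose_succ_succ']
        have e6 : k + (j' + 1) = k + j' + 1 := by omega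
        rw [e6] at hp ⊢
        rw [hp]
        push_cast
        ring

/-- Every `n`-dimensional zero-filiform complex Zinbiel algebra is isomorphic to `NF_n`:
it has a basis `e_1, …, e_n` with `e_i ∘ e_j = C(i+j-1, j) e_{i+j}` for `2 ≤ i+j ≤ n`
and all other products of basis vectors zero. -/
theorem zero_filiform_classification {A : Type*} [AddCommGroup A] [Module ℂ A]
    [FiniteDimensional ℂ A] (M : ZinbielStr A) (n : ℕ)
    (hdim : Module.finrank ℂ A = n)
    (hzf : ∀ i : ℕ, 1 ≤ i → i ≤ n + 1 → Module.finrank ℂ (M.lcs i) = n + 1 - i) :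
    ∃ e : Module.Basis (Fin n) ℂ A, ∀ i j : Fin n,
      M.mul (e i) (e j) =
        if h : (i : ℕ) + (j : ℕ) + 2 ≤ n then
          (((i : ℕ) + (j : ℕ) + 1).choose ((j : ℕ) + 1) : ℂ) •
            e ⟨(i : ℕ) + (j : ℕ) + 1, by omega⟩
        else 0 := by
  classical
  rcases Nat.eq_zero_or_pos n with rfl | hn
  · have hsub : Subsingleton A := Module.finrank_zero_iff.mp hdim
    exact ⟨Module.Basis.empty A, fun i j => i.elim0⟩
  -- n ≥ 1
  have hbot : M.lcs (n + 1) = ⊥ := by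
    have h := hzf (n + 1) (by omega) le_rfl
    simp only [Nat.add_sub_cancel, Nat.sub_self] at h
    exact Submodule.finrank_eq_zero.mp h
  have h2 : Module.finrank ℂ (M.lcs 2) = n - 1 := by
    have := hzf 2 (by omega) (by omega)
    omega
  have hne : M.lcs 2 ≠ ⊤ := by
    intro h
    rw [h, finrank_top, hdim] at h2
    omega
  obtain ⟨x, hx⟩ : ∃ x : A, x ∉ M.lcs 2 := by
    by_contra h
    push_neg at h
    exact hne (Submodule.eq_top_iff'.mpr h)
  have hxne : x ≠ 0 := fun h => hx (h ▸ Submodule.zero_mem _)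
  -- ⊤ = span {x} ⊔ lcs 2 by dimension count
  have htop : (⊤ : Submodule ℂ A) ≤ Submodule.span ℂ {x} ⊔ M.lcs 2 := by
    have hdisj : Disjoint (M.lcs 2) (Submodule.span ℂ {x}) :=
      Submodule.disjoint_span_singleton.mpr (fun hm => absurd hm hx)
    have hinf : M.lcs 2 ⊓ Submodule.span ℂ {x} = ⊥ := disjoint_iff.mp hdisj
    have hsum := Submodule.finrank_sup_add_finrank_inf_eq (M.lcs 2) (Submodule.span ℂ {x})
    rw [hinf] at hsum
    simp only [finrank_bot, add_zero] at hsum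
    rw [h2, finrank_span_singleton hxne] at hsum
    have : Module.finrank ℂ ↥(M.lcs 2 ⊔ Submodule.span ℂ {x}) = n := by omega
    rw [sup_comm]
    exact (Submodule.eq_top_of_finrank_eq (by rw [this, hdim])).ge
  set f : ℕ → A := gen M x with hf
  have hf1 : f 1 = x := rfl
  have key : ∀ k, 1 ≤ k → M.lcs k ≤ Submodule.span ℂ {f k} ⊔ M.lcs (k + 1) := by
    intro k hk
    induction k, hk using Nat.le_induction with
    | base =>
      refine le_trans le_top ?_
      rw [hf1]
      exact htop
    | succ k hk ih =>
      match k, hk with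
      | (k' + 1), _ =>
        rw [lcs_succ_succ]
        apply Submodule.span_le.mpr
        rintro z ⟨a, b, hb, rfl⟩
        have hbmem := ih hb
        rw [Submodule.mem_sup] at hbmem
        obtain ⟨b1, hb1, b2, hb2, rfl⟩ := hbmem
        rw [Submodule.mem_span_singleton] at hb1
        obtain ⟨c, rfl⟩ := hb1
        have hamem := htop (Submodule.mem_top (x := a))
        rw [Submodule.mem_sup] at hamem
        obtain ⟨a1, ha1, a2, ha2, rfl⟩ := hamem
        rw [Submodule.mem_span_singleton] at ha1
        obtain ⟨d, rfl⟩ := ha1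
        have expand : M.mul (d • x + a2) (c • f (k' + 1) + b2)
            = (c * d) • M.mul x (f (k' + 1)) + d • M.mul x b2
              + (c • M.mul a2 (f (k' + 1)) + M.mul a2 b2) := by
          simp only [map_add, map_smul, LinearMap.add_apply, LinearMap.smul_apply,
            smul_add, smul_smul]
          abel
        rw [expand]
        have hgen : M.mul x (f (k' + 1)) = f (k' + 2) := (gen_succ M x (by omega)).symm
        apply Submodule.add_mem
        · apply Submodule.add_mem
          · rw [hgen]
            exact Submodule.mem_sup_left (Submodule.smul_mem _ _
              (Submodule.mem_span_singleton_self _))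
          · exact Submodule.mem_sup_right (Submodule.smul_mem _ _
              (M.mul_mem_lcs_succ (by omega) x hb2))
        · apply Submodule.add_mem
          · refine Submodule.mem_sup_right (Submodule.smul_mem _ _ ?_)
            have := M.mul_mem_lcs 2 (k' + 1) (by omega) (by omega) a2 ha2
              (f (k' + 1)) (gen_mem M x (k' + 1) (by omega))
            have e : 2 + (k' + 1) = k' + 1 + 2 := by omega
            rwa [e] at this
          · refine Submodule.mem_sup_right ?_
            have := M.mul_mem_lcs 2 (k' + 2) (by omega) (by omega) a2 ha2 b2 hb2
            exact M.lcs_le_of_le (by omega) this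
  -- spanning
  set e' : Fin n → A := fun i => f ((i : ℕ) + 1) with he'
  have hspan : (⊤ : Submodule ℂ A) ≤ Submodule.span ℂ (Set.range e') := by
    have down : ∀ m, m ≤ n → M.lcs (n + 1 - m) ≤ Submodule.span ℂ (Set.range e') := by
      intro m
      induction m with
      | zero =>
        intro _
        simp only [Nat.sub_zero, hbot]
        exact bot_le
      | succ m ihm =>
        intro hm
        have h1 : 1 ≤ n - m := by omega
        have e1 : n + 1 - (m + 1) = n - m := by omega
        rw [e1]
        refine le_trans (key (n - m) h1) (sup_le ?_ ?_)
        · rw [Submodule.span_le, Set.singleton_subset_iff]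
          apply Submodule.subset_span
          refine ⟨⟨n - m - 1, by omega⟩, ?_⟩
          simp only [he']
          congr 1
          omega
        · have e2 : n - m + 1 = n + 1 - m := by omega
          rw [e2]
          exact ihm (by omega)
    have := down n le_rfl
    have h1 : n + 1 - n = 1 := by omega
    rw [h1] at this
    exact this
  have hcard : Fintype.card (Fin n) = Module.finrank ℂ A := by simp [hdim]
  refine ⟨basisOfTopLeSpanOfCardEqFinrank e' hspan hcard, ?_⟩
  intro i j
  rw [coe_basisOfTopLeSpanOfCardEqFinrank]
  have hmul := gen_mul_gen M x ((i : ℕ) + 1) (by omega) ((j : ℕ) + 1) (by omega)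
  have e1 : (i : ℕ) + 1 + ((j : ℕ) + 1) = (i : ℕ) + (j : ℕ) + 2 := by omega
  rw [e1] at hmul
  have e2 : (i : ℕ) + (j : ℕ) + 2 - 1 = (i : ℕ) + (j : ℕ) + 1 := by omega
  rw [e2] at hmul
  show M.mul (f ((i : ℕ) + 1)) (f ((j : ℕ) + 1)) = _
  rw [hmul]
  by_cases h : (i : ℕ) + (j : ℕ) + 2 ≤ n
  · rw [dif_pos h]
  · rw [dif_neg h]
    have hz : M.gen x ((i : ℕ) + (j : ℕ) + 2) = 0 := by
      have hmem := gen_mem M x ((i : ℕ) + (j : ℕ) + 2) (by omega)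
      have hle : M.lcs ((i : ℕ) + (j : ℕ) + 2) ≤ M.lcs (n + 1) :=
        M.lcs_le_of_le (by omega)
      have := hle hmem
      rw [hbot] at this
      simpa using this
    rw [hz, smul_zero]

end ZinbielStr
end

section
/- Let A be a finite-dimensional nilpotent complex Zinbiel algebra with nilindex s, and suppose A admits a vector-space direct sum decomposition A = A_1 ⊕ A_2 ⊕ ⋯ ⊕ A_{s−1} such that A_i∘A_j ⊆ A_{i+j} (where A_k = 0 for k ≥ s) and A^k = A_k ⊕ A_{k+1} ⊕ ⋯ ⊕ A_{s−1} for every 1 ≤ k ≤ s−1 (i.e. A is naturally graded). Then the linear span of A_1∘A_j equals A_{j+1} for every j ≥ 1. -/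
namespace ZinbielStr

variable {A : Type*} [AddCommGroup A] [Module ℂ A]

/-- `Ag` is a natural grading of `M` with parts `Ag 1, …, Ag t`:
the parts are independent, `A_i ∘ A_j ⊆ A_{i+j}` (with `A_k = 0` for `k > t` and `k = 0`),
and `A^k = A_k ⊕ A_{k+1} ⊕ ⋯ ⊕ A_t` for all `1 ≤ k ≤ t`. -/
structure IsNaturalGrading (M : ZinbielStr A) (t : ℕ) (Ag : ℕ → Submodule ℂ A) : Prop where
  zero_deg : Ag 0 = ⊥
  high_deg : ∀ k, t < k → Ag k = ⊥
  indep : iSupIndep Ag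
  mul_mem : ∀ i j x y, x ∈ Ag i → y ∈ Ag j → M.mul x y ∈ Ag (i + j)
  lcs_eq : ∀ k, 1 ≤ k → k ≤ t → M.lcs k = ⨆ j, ⨆ (_ : k ≤ j), Ag j

/-- An `n`-dimensional Zinbiel algebra is quasi-filiform if `A^{n-2} ≠ 0` and `A^{n-1} = 0`. -/
def IsQuasiFiliform (M : ZinbielStr A) (n : ℕ) : Prop :=
  Module.finrank ℂ A = n ∧ M.lcs (n - 2) ≠ ⊥ ∧ M.lcs (n - 1) = ⊥

/-- In a naturally graded nilpotent Zinbiel algebra of nilindex `s`,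
the span of `A_1 ∘ A_j` equals `A_{j+1}` for every `j ≥ 1`. -/
theorem span_one_mul_eq_succ {A : Type*} [AddCommGroup A] [Module ℂ A]
    [FiniteDimensional ℂ A] (M : ZinbielStr A) (s : ℕ)
    (hs1 : M.lcs (s - 1) ≠ ⊥) (hs2 : M.lcs s = ⊥)
    (Ag : ℕ → Submodule ℂ A) (hg : M.IsNaturalGrading (s - 1) Ag) :
    ∀ j : ℕ, 1 ≤ j →
      Submodule.span ℂ {z | ∃ x ∈ Ag 1, ∃ y ∈ Ag j, z = M.mul x y} = Ag (j + 1) := by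
  intro j hj
  set S := Submodule.span ℂ {z | ∃ x ∈ Ag 1, ∃ y ∈ Ag j, z = M.mul x y} with hSdef
  have hSle : S ≤ Ag (j + 1) := by
    rw [hSdef, Submodule.span_le]
    rintro z ⟨x, hx, y, hy, rfl⟩
    simpa [Nat.add_comm] using hg.mul_mem 1 j x y hx hy
  by_cases hcase : s - 1 < j + 1
  · have hbot : Ag (j + 1) = ⊥ := hg.high_deg _ hcase
    rw [hbot] at hSle ⊢
    exact le_bot_iff.mp hSle
  · push_neg at hcase
    set T := ⨆ k, ⨆ (_ : j + 2 ≤ k), Ag k with hTdef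
    have key1 : ∀ i k, 1 ≤ i → j ≤ k → ∀ a ∈ Ag i, ∀ b ∈ Ag k,
        M.mul a b ∈ S ⊔ T := by
      intro i k hi hk a ha b hb
      by_cases h1 : i = 1 ∧ k = j
      · obtain ⟨rfl, rfl⟩ := h1
        exact Submodule.mem_sup_left (Submodule.subset_span ⟨a, ha, b, hb, rfl⟩)
      · have hik : j + 2 ≤ i + k := by omega
        exact Submodule.mem_sup_right
          (Submodule.mem_iSup_of_mem (i + k)
            (Submodule.mem_iSup_of_mem hik (hg.mul_mem i k a b ha hb)))
    have key2 : ∀ k, j ≤ k → ∀ b ∈ Ag k, ∀ a : A, M.mul a b ∈ S ⊔ T := by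
      intro k hk b hb a
      have htop : (⊤ : Submodule ℂ A) = ⨆ i, ⨆ (_ : 1 ≤ i), Ag i :=
        hg.lcs_eq 1 le_rfl (by omega)
      have ha : a ∈ (⊤ : Submodule ℂ A) := trivial
      rw [htop] at ha
      have hle : (⨆ i, ⨆ (_ : 1 ≤ i), Ag i) ≤
          Submodule.comap (M.mul.flip b) (S ⊔ T) :=
        iSup_le fun i => iSup_le fun hi => fun x hx => key1 i k hi hk x hx b hb
      simpa using hle ha
    have key3 : M.lcs (j + 1) ≤ S ⊔ T := by
      obtain ⟨m, rfl⟩ : ∃ m, j = m + 1 := ⟨j - 1, by omega⟩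
      show M.lcs (m + 2) ≤ S ⊔ T
      rw [show M.lcs (m + 2) =
          Submodule.span ℂ {z | ∃ a b, b ∈ M.lcs (m + 1) ∧ z = M.mul a b} from rfl,
        Submodule.span_le]
      rintro z ⟨a, b, hb, rfl⟩
      have hlcs : M.lcs (m + 1) = ⨆ k, ⨆ (_ : m + 1 ≤ k), Ag k :=
        hg.lcs_eq (m + 1) (by omega) (by omega)
      rw [hlcs] at hb
      have hle : (⨆ k, ⨆ (_ : m + 1 ≤ k), Ag k) ≤
          Submodule.comap (M.mul a) (S ⊔ T) :=
        iSup_le fun k => iSup_le fun hk => fun y hy => key2 k hk y hy a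
      exact hle hb
    have hAgle : Ag (j + 1) ≤ S ⊔ T := by
      refine le_trans ?_ key3
      rw [hg.lcs_eq (j + 1) (by omega) hcase]
      exact le_iSup₂ (f := fun k (_ : j + 1 ≤ k) => Ag k) (j + 1) le_rfl
    have hdisj : Disjoint (Ag (j + 1)) T := by
      refine (hg.indep (j + 1)).mono_right ?_
      refine iSup_le fun k => iSup_le fun hk => ?_
      exact le_iSup₂ (f := fun k (_ : k ≠ j + 1) => Ag k) k (by omega)
    have hmod : (S ⊔ T) ⊓ Ag (j + 1) = S ⊔ T ⊓ Ag (j + 1) :=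
      sup_inf_assoc_of_le T hSle
    have hfin : Ag (j + 1) = S := by
      have h1 : (S ⊔ T) ⊓ Ag (j + 1) = Ag (j + 1) := inf_eq_right.mpr hAgle
      rw [hmod, hdisj.symm.eq_bot, sup_bot_eq] at h1
      exact h1.symm
    exact hfin.symm

end ZinbielStr
end

section
/- Every n-dimensional (n ≥ 6) naturally graded quasi-filiform complex Zinbiel algebra of type A_(1) is isomorphic to the algebra KF_n^1 with basis e_1, …, e_n and products e_i∘e_j = C(i+j−1, j)·e_{i+j} for 2 ≤ i+j ≤ n−2, all other products of basis vectors being zero. -/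
namespace ZinbielStr

variable {A : Type*} [AddCommGroup A] [Module ℂ A]

/-- Left chain powers of an element `e`. -/
private noncomputable def ch (M : ZinbielStr A) (e : A) : ℕ → A
  | 0 => 0
  | 1 => e
  | k + 2 => M.mul e (ch M e (k + 1))

private lemma ch_one (M : ZinbielStr A) (e : A) : ch M e 1 = e := rfl

private lemma ch_succ (M : ZinbielStr A) (e : A) (k : ℕ) (hk : 1 ≤ k) :
    ch M e (k + 1) = M.mul e (ch M e k) := by
  obtain ⟨m, rfl⟩ : ∃ m, k = m + 1 := ⟨k - 1, by omega⟩
  rfl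

private lemma choose_aux (m j : ℕ) (hm : 1 ≤ m) (hj : 1 ≤ j) :
    (m + j - 1).choose j + (m + j - 1).choose m = (m + j).choose j := by
  obtain ⟨a, rfl⟩ : ∃ a, m = a + 1 := ⟨m - 1, by omega⟩
  obtain ⟨b, rfl⟩ : ∃ b, j = b + 1 := ⟨j - 1, by omega⟩
  have h1 : (a + 1) + (b + 1) - 1 = a + b + 1 := by omega
  have h2 : (a + 1) + (b + 1) = (a + b + 1) + 1 := by omega
  have h3 : (a + b + 1).choose (a + 1) = (a + b + 1).choose b := by
    have := Nat.choose_symm (n := a + b + 1) (k := a + 1) (by omega)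
    rw [show a + b + 1 - (a + 1) = b by omega] at this
    exact this.symm
  rw [h1, h2, h3, Nat.choose_succ_succ (a + b + 1) b]
  simp only [Nat.succ_eq_add_one]
  omega

private lemma ch_mul (M : ZinbielStr A) (e : A) :
    ∀ s i j : ℕ, 1 ≤ i → 1 ≤ j → i + j ≤ s →
      M.mul (ch M e i) (ch M e j) = (((i + j - 1).choose j : ℕ) : ℂ) • ch M e (i + j) := by
  intro s
  induction s with
  | zero => intro i j hi hj h; omega
  | succ s ih =>
    intro i j hi hj hs
    rcases Nat.lt_or_ge i 2 with h1 | h2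
    · have hi1 : i = 1 := by omega
      subst hi1
      rw [ch_one, ← ch_succ M e j hj]
      rw [show 1 + j - 1 = j by omega, Nat.choose_self, show 1 + j = j + 1 by omega]
      simp
    · obtain ⟨m, rfl⟩ : ∃ m, i = m + 1 := ⟨i - 1, by omega⟩
      have hm : 1 ≤ m := by omega
      rw [ch_succ M e m hm, M.zinbiel e (ch M e m) (ch M e j)]
      rw [ih m j hm hj (by omega), ih j m hj hm (by omega)]
      rw [map_smul, map_smul]
      rw [show j + m = m + j from Nat.add_comm j m]
      rw [← ch_succ M e (m + j) (by omega)]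
      rw [show m + j + 1 = m + 1 + j by omega]
      rw [← add_smul, ← Nat.cast_add, choose_aux m j hm hj,
        show m + 1 + j - 1 = m + j by omega]

/-- two additive `ℂ`-valued maps on a submodule whose pointwise product vanishes:
one of them vanishes. -/
private lemma prod_zero_aux {W : Submodule ℂ A} {α β : A → ℂ}
    (hα : ∀ x ∈ W, ∀ y ∈ W, α (x + y) = α x + α y)
    (hβ : ∀ x ∈ W, ∀ y ∈ W, β (x + y) = β x + β y)
    (h : ∀ x ∈ W, α x * β x = 0) :
    (∀ x ∈ W, α x = 0) ∨ (∀ x ∈ W, β x = 0) := by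
  by_contra hc
  push_neg at hc
  obtain ⟨⟨x0, hx0, hax⟩, ⟨y0, hy0, hby⟩⟩ := hc
  have h1 : β x0 = 0 := by
    rcases mul_eq_zero.1 (h x0 hx0) with h' | h'
    · exact absurd h' hax
    · exact h'
  have h2 : α y0 = 0 := by
    rcases mul_eq_zero.1 (h y0 hy0) with h' | h'
    · exact h'
    · exact absurd h' hby
  have h3 := h (x0 + y0) (W.add_mem hx0 hy0)
  rw [hα x0 hx0 y0 hy0, hβ x0 hx0 y0 hy0, h1, h2] at h3
  simp only [add_zero, zero_add] at h3
  rcases mul_eq_zero.1 h3 with h' | h'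
  · exact hax h'
  · exact hby h'

set_option maxHeartbeats 1000000 in
/-- Every `n`-dimensional (`n ≥ 6`) naturally graded quasi-filiform complex Zinbiel
algebra of type `A_(1)` (i.e. `dim A_1 = 3`) is isomorphic to `KF_n^1`. -/
theorem type_one_classification {A : Type*} [AddCommGroup A] [Module ℂ A]
    [FiniteDimensional ℂ A] (M : ZinbielStr A) (n : ℕ) (hn : 6 ≤ n)
    (Ag : ℕ → Submodule ℂ A)
    (hqf : M.IsQuasiFiliform n) (hg : M.IsNaturalGrading (n - 2) Ag)
    (htype : Module.finrank ℂ (Ag 1) = 3) :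
    ∃ e : Module.Basis (Fin n) ℂ A, ∀ i j : Fin n,
      M.mul (e i) (e j) =
        if h : (i : ℕ) + (j : ℕ) + 2 ≤ n - 2 then
          (((i : ℕ) + (j : ℕ) + 1).choose ((j : ℕ) + 1) : ℂ) •
            e ⟨(i : ℕ) + (j : ℕ) + 1, by omega⟩
        else 0 := by
  obtain ⟨hdim, hlow, hhigh⟩ := hqf
  obtain ⟨h0, hhi, hind, hmul, hlcs⟩ := hg
  set t := n - 2 with ht
  have ht4 : 4 ≤ t := by omega
  -- the grading spans everything
  have hsupT : (⨆ j, Ag j) = ⊤ := by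
    have h1 : (⊤ : Submodule ℂ A) = ⨆ j, ⨆ (_ : 1 ≤ j), Ag j := by
      rw [← hlcs 1 (by omega) (by omega)]; rfl
    exact top_unique (h1.le.trans (iSup_mono fun j => iSup_le fun _ => le_rfl))
  -- recursion for the lcs
  have hlcsS : ∀ k, 1 ≤ k → M.lcs (k + 1) =
      Submodule.span ℂ {z | ∃ a b, b ∈ M.lcs k ∧ z = M.mul a b} := by
    intro k hk
    obtain ⟨m, rfl⟩ : ∃ m, k = m + 1 := ⟨k - 1, by omega⟩
    rfl
  -- each graded piece is spanned by products of `Ag 1` with the previous piece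
  have hG2 : ∀ k, 1 ≤ k → k + 1 ≤ t → Ag (k + 1) ≤
      Submodule.span ℂ {z | ∃ x ∈ Ag 1, ∃ y ∈ Ag k, z = M.mul x y} := by
    intro k hk hkt
    set P := Submodule.span ℂ {z | ∃ x ∈ Ag 1, ∃ y ∈ Ag k, z = M.mul x y} with hP
    have hPle : P ≤ Ag (k + 1) := by
      rw [hP]
      refine Submodule.span_le.2 ?_
      rintro z ⟨x, hx, y, hy, rfl⟩
      simpa [Nat.add_comm] using hmul 1 k x y hx hy
    set Q := ⨆ j, ⨆ (_ : k + 2 ≤ j), Ag j with hQ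
    have hQle : Q ≤ ⨆ j, ⨆ (_ : j ≠ k + 1), Ag j := by
      refine iSup_le fun j => iSup_le fun hj => ?_
      exact le_iSup_of_le j (le_iSup_of_le (by omega) le_rfl)
    have hgen : ∀ bb : A, bb ∈ M.lcs k → ∀ aa : A, M.mul aa bb ∈ P ⊔ Q := by
      intro bb hbb
      rw [hlcs k hk (by omega)] at hbb
      refine Submodule.iSup_induction _ (motive := fun w => ∀ aa : A, M.mul aa w ∈ P ⊔ Q) hbb ?_ ?_ ?_
      · intro j y hy aa
        by_cases hkj : k ≤ j
        · rw [iSup_pos hkj] at hy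
          have haT : aa ∈ ⨆ i, Ag i := hsupT ▸ Submodule.mem_top
          refine Submodule.iSup_induction _ (motive := fun w => M.mul w y ∈ P ⊔ Q) haT ?_ ?_ ?_
          · intro i x hx
            rcases Nat.eq_zero_or_pos i with rfl | hi
            · have hx0 : x = 0 := by rw [h0] at hx; simpa using hx
              simp [hx0]
            · rcases Nat.lt_or_ge (i + j) (k + 2) with hlow' | hhigh'
              · have hi1 : i = 1 := by omega
                have hjk : j = k := by omega
                subst hi1; subst hjk
                exact Submodule.mem_sup_left (Submodule.subset_span ⟨x, hx, y, hy, rfl⟩)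
              · refine Submodule.mem_sup_right ?_
                refine Submodule.mem_iSup_of_mem (i + j) ?_
                exact Submodule.mem_iSup_of_mem (by omega) (hmul i j x y hx hy)
          · simp
          · intro z w hz hw
            have := Submodule.add_mem _ hz hw
            simpa [map_add] using this
        · rw [iSup_neg hkj] at hy
          have hy0 : y = 0 := by simpa using hy
          simp [hy0]
      · intro aa; simp
      · intro z w hz hw aa
        have := Submodule.add_mem _ (hz aa) (hw aa)
        simpa [map_add] using this
    have hsub : M.lcs (k + 1) ≤ P ⊔ Q := by
      rw [hlcsS k hk]
      refine Submodule.span_le.2 ?_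
      rintro z ⟨aa, bb, hbb, rfl⟩
      exact hgen bb hbb aa
    have hAgle : Ag (k + 1) ≤ M.lcs (k + 1) := by
      rw [hlcs (k + 1) (by omega) hkt]
      exact le_iSup_of_le (k + 1) (le_iSup_of_le le_rfl le_rfl)
    have hdisj : Disjoint (Ag (k + 1)) Q := (hind (k + 1)).mono_right hQle
    intro x hx
    obtain ⟨p, hp, q, hq, hpq⟩ := Submodule.mem_sup.1 (hsub (hAgle hx))
    have hq1 : q ∈ Ag (k + 1) := by
      have hq' : q = x - p := by rw [← hpq]; abel
      rw [hq']
      exact Submodule.sub_mem _ hx (hPle hp)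
    have hq0 : q = 0 := by
      exact (Submodule.mem_bot ℂ).1 (hdisj.le_bot (Submodule.mem_inf.2 ⟨hq1, hq⟩))
    rw [hq0, add_zero] at hpq
    exact hpq ▸ hp
  -- nontriviality of graded pieces
  have hAgne : ∀ k, 1 ≤ k → k ≤ t → Ag k ≠ ⊥ := by
    intro k hk1 hkt hbot
    have hstep : ∀ d, k + d ≤ t → Ag (k + d) = ⊥ := by
      intro d
      induction d with
      | zero => intro _; simpa using hbot
      | succ d ih =>
        intro hdt
        have h1 : Ag (k + d) = ⊥ := ih (by omega)
        have h2 := hG2 (k + d) (by omega) (by omega)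
        rw [show k + (d + 1) = (k + d) + 1 by omega]
        refine le_bot_iff.1 (h2.trans ?_)
        refine Submodule.span_le.2 ?_
        rintro z ⟨x, hx, y, hy, rfl⟩
        rw [h1] at hy
        have hy0 : y = 0 := by simpa using hy
        simp [hy0]
    have hAgt : Ag t = ⊥ := by
      have := hstep (t - k) (by omega)
      rwa [show k + (t - k) = t by omega] at this
    apply hlow
    rw [hlcs t (by omega) le_rfl]
    refine le_bot_iff.1 (iSup_le fun j => iSup_le fun hj => ?_)
    rcases eq_or_lt_of_le hj with h | h
    · rw [← h]; exact hAgt.le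
    · exact (hhi j h).le
  -- graded pieces in degrees 2..t are one-dimensional
  have hrank : ∀ k, 2 ≤ k → k ≤ t → Module.finrank ℂ (Ag k) = 1 := by
    have hsum : ∀ m : ℕ, Module.finrank ℂ ↥(⨆ j ∈ Finset.range m, Ag j) =
        ∑ j ∈ Finset.range m, Module.finrank ℂ (Ag j) := by
      intro m
      induction m with
      | zero => rw [show (⨆ j ∈ Finset.range 0, Ag j) = ⊥ from by simp]; simp
      | succ m ih =>
        rw [Finset.sum_range_succ, ← ih]
        have hins : (⨆ j ∈ Finset.range (m + 1), Ag j) =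
            Ag m ⊔ ⨆ j ∈ Finset.range m, Ag j := by
          rw [Finset.range_add_one]
          apply le_antisymm
          · refine iSup_le fun j => iSup_le fun hj => ?_
            rcases Finset.mem_insert.1 hj with rfl | hj'
            · exact le_sup_left
            · exact le_sup_of_le_right (le_iSup_of_le j (le_iSup_of_le hj' le_rfl))
          · refine sup_le (le_iSup_of_le m (le_iSup_of_le (Finset.mem_insert_self m _) le_rfl)) ?_
            exact iSup_le fun j => iSup_le fun hj =>
              le_iSup_of_le j (le_iSup_of_le (Finset.mem_insert_of_mem hj) le_rfl)
        rw [hins]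
        have hdisj : Disjoint (Ag m) (⨆ j ∈ Finset.range m, Ag j) := by
          have := hind.disjoint_biSup (x := m) (y := {j | j ∈ Finset.range m}) (by simp)
          simpa using this
        have hinf : Ag m ⊓ (⨆ j ∈ Finset.range m, Ag j) = ⊥ := disjoint_iff.1 hdisj
        have hfr := Submodule.finrank_sup_add_finrank_inf_eq
          (Ag m) (⨆ j ∈ Finset.range m, Ag j)
        rw [hinf] at hfr
        simp only [finrank_bot, add_zero] at hfr
        omega
    have htop2 : (⨆ j ∈ Finset.range (t + 1), Ag j) = ⊤ := by
      rw [← hsupT]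
      apply le_antisymm
      · exact iSup₂_le fun j _ => le_iSup Ag j
      · refine iSup_le fun j => ?_
        by_cases hj : j ≤ t
        · exact le_iSup₂ (f := fun j _ => Ag j) j (Finset.mem_range.2 (by omega))
        · rw [hhi j (by omega)]; exact bot_le
    have hn3 : ∑ j ∈ Finset.range (t + 1), Module.finrank ℂ (Ag j) = n := by
      rw [← hsum, htop2, finrank_top, hdim]
    have hge : ∀ j, 2 ≤ j → j ≤ t → 1 ≤ Module.finrank ℂ (Ag j) := by
      intro j h2 hjt
      have : Nontrivial ↥(Ag j) := Submodule.nontrivial_iff_ne_bot.2 (hAgne j (by omega) hjt)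
      exact Module.finrank_pos
    intro k hk2 hkt
    by_contra hne
    have hk2' : 2 ≤ Module.finrank ℂ (Ag k) := by
      have := hge k hk2 hkt; omega
    have hsplit : ∑ j ∈ Finset.range (t + 1), Module.finrank ℂ (Ag j) =
        Module.finrank ℂ (Ag 0) + Module.finrank ℂ (Ag 1) +
          ∑ j ∈ Finset.Ico 2 (t + 1), Module.finrank ℂ (Ag j) := by
      rw [Finset.range_eq_Ico,
        ← Finset.sum_Ico_consecutive (fun j => Module.finrank ℂ (Ag j))
          (by omega : (0:ℕ) ≤ 2) (by omega : (2:ℕ) ≤ t + 1),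
        show Finset.Ico 0 2 = ({0, 1} : Finset ℕ) from rfl,
        Finset.sum_pair (by omega : (0:ℕ) ≠ 1)]
    have hD0 : Module.finrank ℂ (Ag 0) = 0 := by rw [h0]; exact finrank_bot ℂ A
    have hkmem : k ∈ Finset.Ico 2 (t + 1) := Finset.mem_Ico.2 ⟨hk2, by omega⟩
    have hbig : ∑ j ∈ Finset.Ico 2 (t + 1), Module.finrank ℂ (Ag j) ≥
        ((Finset.Ico 2 (t + 1)).card - 1) + 2 := by
      have he1 := Finset.sum_erase_add (Finset.Ico 2 (t + 1))
        (fun j => Module.finrank ℂ (Ag j)) hkmem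
      have he2 : ((Finset.Ico 2 (t + 1)).erase k).card • 1 ≤
          ∑ j ∈ (Finset.Ico 2 (t + 1)).erase k, Module.finrank ℂ (Ag j) := by
        refine Finset.card_nsmul_le_sum _ _ _ ?_
        intro x hx
        have hx' := Finset.mem_of_mem_erase hx
        rw [Finset.mem_Ico] at hx'
        exact hge x hx'.1 (by omega)
      have he3 : ((Finset.Ico 2 (t + 1)).erase k).card = (Finset.Ico 2 (t + 1)).card - 1 :=
        Finset.card_erase_of_mem hkmem
      simp only [smul_eq_mul, mul_one] at he2
      omega
    have hcard' : (Finset.Ico 2 (t + 1)).card = t - 1 := by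
      rw [Nat.card_Ico]; omega
    omega
  -- pick generators of `Ag 2, Ag 3, Ag 4`
  have hgen1 : ∀ k, 2 ≤ k → k ≤ t → ∃ x, x ∈ Ag k ∧ x ≠ 0 ∧
      ∀ z ∈ Ag k, ∃ c : ℂ, z = c • x := by
    intro k h2 hkt
    have h1 := hrank k h2 hkt
    rw [finrank_eq_one_iff'] at h1
    obtain ⟨v, hv0, hvs⟩ := h1
    refine ⟨(v : A), v.2, by simpa using hv0, ?_⟩
    intro z hz
    obtain ⟨c, hc⟩ := hvs ⟨z, hz⟩
    exact ⟨c, by simpa using congrArg Subtype.val hc.symm⟩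
  obtain ⟨x2, hx2m, hx2ne, hsp2⟩ := hgen1 2 (by omega) (by omega)
  obtain ⟨x3, hx3m, hx3ne, hsp3⟩ := hgen1 3 (by omega) (by omega)
  obtain ⟨x4, hx4m, hx4ne, hsp4⟩ := hgen1 4 (by omega) (by omega)
  -- coefficient functions
  have hco2' : ∀ z : A, ∃ c : ℂ, z ∈ Ag 2 → z = c • x2 := by
    intro z
    by_cases hz : z ∈ Ag 2
    · obtain ⟨c, hc⟩ := hsp2 z hz; exact ⟨c, fun _ => hc⟩
    · exact ⟨0, fun h => absurd h hz⟩
  choose co2 hco2 using hco2'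
  have hco3' : ∀ z : A, ∃ c : ℂ, z ∈ Ag 3 → z = c • x3 := by
    intro z
    by_cases hz : z ∈ Ag 3
    · obtain ⟨c, hc⟩ := hsp3 z hz; exact ⟨c, fun _ => hc⟩
    · exact ⟨0, fun h => absurd h hz⟩
  choose co3 hco3 using hco3'
  have hco4' : ∀ z : A, ∃ c : ℂ, z ∈ Ag 4 → z = c • x4 := by
    intro z
    by_cases hz : z ∈ Ag 4
    · obtain ⟨c, hc⟩ := hsp4 z hz; exact ⟨c, fun _ => hc⟩
    · exact ⟨0, fun h => absurd h hz⟩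
  choose co4 hco4 using hco4'
  have hu2 : ∀ (z : A) (c : ℂ), z = c • x2 → co2 z = c := by
    intro z c hzc
    have hz : z ∈ Ag 2 := hzc ▸ Submodule.smul_mem _ c hx2m
    exact smul_left_injective ℂ hx2ne ((hco2 z hz).symm.trans hzc)
  have hu3 : ∀ (z : A) (c : ℂ), z = c • x3 → co3 z = c := by
    intro z c hzc
    have hz : z ∈ Ag 3 := hzc ▸ Submodule.smul_mem _ c hx3m
    exact smul_left_injective ℂ hx3ne ((hco3 z hz).symm.trans hzc)
  have hu4 : ∀ (z : A) (c : ℂ), z = c • x4 → co4 z = c := by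
    intro z c hzc
    have hz : z ∈ Ag 4 := hzc ▸ Submodule.smul_mem _ c hx4m
    exact smul_left_injective ℂ hx4ne ((hco4 z hz).symm.trans hzc)
  set B : A → A → ℂ := fun x y => co2 (M.mul x y) with hB_def
  set φ : A → ℂ := fun x => co3 (M.mul x x2) with hφ_def
  set ψ : A → ℂ := fun x => co3 (M.mul x2 x) with hψ_def
  set φ3 : A → ℂ := fun x => co4 (M.mul x x3) with hφ3_def
  set c22 : ℂ := co4 (M.mul x2 x2) with hc22_def
  have hBspec : ∀ x ∈ Ag 1, ∀ y ∈ Ag 1, M.mul x y = B x y • x2 :=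
    fun x hx y hy => hco2 _ (hmul 1 1 x y hx hy)
  have hφspec : ∀ x ∈ Ag 1, M.mul x x2 = φ x • x3 :=
    fun x hx => hco3 _ (hmul 1 2 x x2 hx hx2m)
  have hψspec : ∀ x ∈ Ag 1, M.mul x2 x = ψ x • x3 :=
    fun x hx => hco3 _ (hmul 2 1 x2 x hx2m hx)
  have hφ3spec : ∀ x ∈ Ag 1, M.mul x x3 = φ3 x • x4 :=
    fun x hx => hco4 _ (hmul 1 3 x x3 hx hx3m)
  have hc22spec : M.mul x2 x2 = c22 • x4 := hco4 _ (hmul 2 2 x2 x2 hx2m hx2m)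
  -- additivity
  have hφadd : ∀ x ∈ Ag 1, ∀ y ∈ Ag 1, φ (x + y) = φ x + φ y := by
    intro x hx y hy
    have h1 : M.mul (x + y) x2 = (φ x + φ y) • x3 := by
      rw [map_add, LinearMap.add_apply, hφspec x hx, hφspec y hy, add_smul]
    have h2 := hφspec (x + y) ((Ag 1).add_mem hx hy)
    exact (smul_left_injective ℂ hx3ne (h1.symm.trans h2)).symm
  have hφsmul : ∀ x ∈ Ag 1, ∀ c : ℂ, φ (c • x) = c * φ x := by
    intro x hx c
    have h1 : M.mul (c • x) x2 = (c * φ x) • x3 := by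
      rw [map_smul, LinearMap.smul_apply, hφspec x hx, smul_smul]
    have h2 := hφspec (c • x) (Submodule.smul_mem _ c hx)
    exact (smul_left_injective ℂ hx3ne (h1.symm.trans h2)).symm
  have hφ3add : ∀ x ∈ Ag 1, ∀ y ∈ Ag 1, φ3 (x + y) = φ3 x + φ3 y := by
    intro x hx y hy
    have h1 : M.mul (x + y) x3 = (φ3 x + φ3 y) • x4 := by
      rw [map_add, LinearMap.add_apply, hφ3spec x hx, hφ3spec y hy, add_smul]
    have h2 := hφ3spec (x + y) ((Ag 1).add_mem hx hy)
    exact (smul_left_injective ℂ hx4ne (h1.symm.trans h2)).symm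
  -- the fundamental scalar identities
  have hIV : ∀ x ∈ Ag 1, ∀ y ∈ Ag 1, ∀ z ∈ Ag 1,
      B x y * ψ z = φ x * (B y z + B z y) := by
    intro x hx y hy z hz
    have hz1 := M.zinbiel x y z
    rw [hBspec x hx y hy, hBspec y hy z hz, hBspec z hz y hy] at hz1
    rw [map_smul, LinearMap.smul_apply, hψspec z hz] at hz1
    rw [map_smul, map_smul, hφspec x hx] at hz1
    rw [smul_smul, smul_smul, smul_smul, ← add_smul] at hz1
    have := smul_left_injective ℂ hx3ne hz1
    linear_combination this
  have hI2 : ∀ x ∈ Ag 1, ∀ y ∈ Ag 1, B x y * c22 = φ3 x * (φ y + ψ y) := by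
    intro x hx y hy
    have hz1 := M.zinbiel x y x2
    rw [hBspec x hx y hy] at hz1
    rw [map_smul, LinearMap.smul_apply, hc22spec, smul_smul] at hz1
    rw [hφspec y hy, hψspec y hy, map_smul, map_smul, hφ3spec x hx] at hz1
    rw [smul_smul, smul_smul, ← add_smul] at hz1
    have := smul_left_injective ℂ hx4ne hz1
    linear_combination this
  -- nonvanishing
  have hBne : ∃ x ∈ Ag 1, ∃ y ∈ Ag 1, B x y ≠ 0 := by
    by_contra hB0
    push_neg at hB0
    apply hAgne 2 (by omega) (by omega)
    have h2 := hG2 1 le_rfl (by omega)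
    refine le_bot_iff.1 (h2.trans ?_)
    refine Submodule.span_le.2 ?_
    rintro z ⟨x, hx, y, hy, rfl⟩
    have hz := hBspec x hx y hy
    rw [hB0 x hx y hy, zero_smul] at hz
    simp [hz]
  have hφne : ∃ x ∈ Ag 1, φ x ≠ 0 := by
    by_contra hφ0
    push_neg at hφ0
    apply hAgne 3 (by omega) (by omega)
    have h2 := hG2 2 (by omega) (by omega)
    refine le_bot_iff.1 (h2.trans ?_)
    refine Submodule.span_le.2 ?_
    rintro z ⟨x, hx, y, hy, rfl⟩
    obtain ⟨c, rfl⟩ := hsp2 y hy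
    simp [map_smul, hφspec x hx, hφ0 x hx]
  have hφ3ne : ∃ x ∈ Ag 1, φ3 x ≠ 0 := by
    by_contra hφ0
    push_neg at hφ0
    apply hAgne 4 (by omega) (by omega)
    have h2 := hG2 3 (by omega) (by omega)
    refine le_bot_iff.1 (h2.trans ?_)
    refine Submodule.span_le.2 ?_
    rintro z ⟨x, hx, y, hy, rfl⟩
    obtain ⟨c, rfl⟩ := hsp3 y hy
    simp [map_smul, hφ3spec x hx, hφ0 x hx]
  -- the multiplication on `Ag 1` is a rank-one symmetric form
  have hBform : ∃ a : ℂ, a ≠ 0 ∧ ∀ x ∈ Ag 1, ∀ y ∈ Ag 1, B x y = a * (φ x * φ y) := by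
    by_cases hψ0 : ∀ z ∈ Ag 1, ψ z = 0
    · exfalso
      obtain ⟨xφ, hxφm, hxφ⟩ := hφne
      have hSym : ∀ y ∈ Ag 1, ∀ z ∈ Ag 1, B y z + B z y = 0 := by
        intro y hy z hz
        have h1 := hIV xφ hxφm y hy z hz
        rw [hψ0 z hz, mul_zero] at h1
        rcases mul_eq_zero.1 h1.symm with h' | h'
        · exact absurd h' hxφ
        · exact h'
      have hkey : ∀ x ∈ Ag 1, φ x * φ3 x = 0 := by
        intro x hx
        have h1 := hI2 x hx x hx
        have h2 : B x x = 0 := add_self_eq_zero.1 (hSym x hx x hx)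
        rw [h2, hψ0 x hx, zero_mul, add_zero] at h1
        linear_combination -h1
      rcases prod_zero_aux hφadd hφ3add hkey with h | h
      · exact hxφ (h xφ hxφm)
      · obtain ⟨w3, hw3m, hw3⟩ := hφ3ne
        exact hw3 (h w3 hw3m)
    · push_neg at hψ0
      obtain ⟨z0, hz0m, hz0⟩ := hψ0
      set γ : A → ℂ := fun y => (B y z0 + B z0 y) / ψ z0 with hγ_def
      have hBγ : ∀ x ∈ Ag 1, ∀ y ∈ Ag 1, B x y = φ x * γ y := by
        intro x hx y hy
        have h1 := hIV x hx y hy z0 hz0m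
        simp only [hγ_def]
        field_simp
        linear_combination h1
      obtain ⟨xB, hxBm, yB, hyBm, hBxy⟩ := hBne
      have hφxB : φ xB ≠ 0 := fun h => hBxy (by rw [hBγ xB hxBm yB hyBm, h, zero_mul])
      have hγyB : γ yB ≠ 0 := fun h => hBxy (by rw [hBγ xB hxBm yB hyBm, h, mul_zero])
      have hstar : ∀ y ∈ Ag 1, ∀ z ∈ Ag 1, γ y * ψ z = φ y * γ z + φ z * γ y := by
        intro y hy z hz
        have h1 := hIV xB hxBm y hy z hz
        rw [hBγ xB hxBm y hy, hBγ y hy z hz, hBγ z hz y hy] at h1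
        have h2 : φ xB * (γ y * ψ z) = φ xB * (φ y * γ z + φ z * γ y) := by
          linear_combination h1
        exact mul_left_cancel₀ hφxB h2
      by_cases hδ : ∀ z ∈ Ag 1, ψ z - φ z = 0
      · exfalso
        have h1 := hstar xB hxBm yB hyBm
        have h2 : ψ yB = φ yB := by
          have := hδ yB hyBm; linear_combination this
        rw [h2] at h1
        have h3 : φ xB * γ yB = 0 := by linear_combination -h1
        rcases mul_eq_zero.1 h3 with h' | h'
        · exact hφxB h'
        · exact hγyB h'
      · push_neg at hδ
        obtain ⟨z1, hz1m, hz1⟩ := hδ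
        have hγφ : ∀ y ∈ Ag 1, γ y = (γ z1 / (ψ z1 - φ z1)) * φ y := by
          intro y hy
          have h1 := hstar y hy z1 hz1m
          field_simp
          linear_combination h1
        refine ⟨γ z1 / (ψ z1 - φ z1), ?_, ?_⟩
        · intro h0
          apply hγyB
          rw [hγφ yB hyBm, h0, zero_mul]
        · intro x hx y hy
          rw [hBγ x hx y hy, hγφ y hy]
          ring
  obtain ⟨a, ha, hBa⟩ := hBform
  obtain ⟨x1, hx1m, hx1⟩ := hφne
  set e : A := (φ x1)⁻¹ • x1 with he_def
  have hem : e ∈ Ag 1 := Submodule.smul_mem _ _ hx1m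
  have hφe : φ e = 1 := by
    have h1 : M.mul e x2 = (1 : ℂ) • x3 := by
      rw [he_def, map_smul, LinearMap.smul_apply, hφspec x1 hx1m, smul_smul,
        inv_mul_cancel₀ hx1]
    exact hu3 _ _ h1
  have hmulee : M.mul e e = a • x2 := by
    rw [hBspec e hem e hem, hBa e hem e hem, hφe]
    ring_nf
  have hzero : ∀ v ∈ Ag 1, φ v = 0 → ∀ u ∈ Ag 1, M.mul v u = 0 ∧ M.mul u v = 0 := by
    intro v hv hφv u hu
    constructor
    · rw [hBspec v hv u hu, hBa v hv u hu, hφv]; simp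
    · rw [hBspec u hu v hv, hBa u hu v hv, hφv]; simp
  -- chain membership
  have hchmem : ∀ k, 1 ≤ k → ch M e k ∈ Ag k := by
    intro k
    induction k with
    | zero => omega
    | succ k ih =>
      intro _
      rcases Nat.eq_zero_or_pos k with rfl | hk
      · exact hem
      · rw [ch_succ M e k hk]
        simpa [Nat.add_comm] using hmul 1 k e (ch M e k) hem (ih hk)
  have hchtop : ∀ k, t < k → ch M e k = 0 := by
    intro k hk
    have h1 : ch M e k ∈ Ag k := hchmem k (by omega)
    rw [hhi k hk] at h1
    simpa using h1
  -- degenerate elements annihilate the chain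
  have hvch : ∀ v ∈ Ag 1, φ v = 0 → ∀ k, 1 ≤ k →
      M.mul v (ch M e k) = 0 ∧ M.mul (ch M e k) v = 0 := by
    intro v hv hφv
    have hve : M.mul v e = 0 := (hzero v hv hφv e hem).1
    have hev : M.mul e v = 0 := (hzero v hv hφv e hem).2
    intro k
    induction k with
    | zero => omega
    | succ k ih =>
      intro _
      rcases Nat.eq_zero_or_pos k with rfl | hk
      · exact ⟨hve, hev⟩
      obtain ⟨ih1, ih2⟩ := ih hk
      have hcke : M.mul (ch M e k) e = ((k : ℕ) : ℂ) • ch M e (k + 1) := by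
        have h1 := ch_mul M e (k + 1) k 1 hk le_rfl le_rfl
        rw [ch_one, show k + 1 - 1 = k by omega, Nat.choose_one_right] at h1
        exact h1
      constructor
      · have hz := M.zinbiel v e (ch M e k)
        rw [hve, ← ch_succ M e k hk, hcke, map_smul, map_zero, LinearMap.zero_apply] at hz
        have hz2 : ((k : ℂ) + 1) • M.mul v (ch M e (k + 1)) = 0 := by
          rw [add_smul, one_smul, add_comm]
          exact hz.symm
        exact (smul_eq_zero.1 hz2).resolve_left (Nat.cast_add_one_ne_zero k)
      · have hz := M.zinbiel e (ch M e k) v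
        rw [ih2, ih1, ← ch_succ M e k hk] at hz
        simpa using hz
  -- the chain spans the graded pieces
  have hch1 : ∀ k, 2 ≤ k → k ≤ t → Ag k ≤ Submodule.span ℂ {ch M e k} := by
    intro k hk2
    induction k, hk2 using Nat.le_induction with
    | base =>
      intro _ z hz
      obtain ⟨c, rfl⟩ := hsp2 z hz
      rw [Submodule.mem_span_singleton]
      refine ⟨c / a, ?_⟩
      have hch2 : ch M e 2 = a • x2 := hmulee ▸ rfl
      rw [hch2, smul_smul, div_mul_cancel₀ c ha]
    | succ k hk ih =>
      intro hkt
      have hspan := hG2 k (by omega) hkt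
      refine hspan.trans (Submodule.span_le.2 ?_)
      rintro z ⟨x, hx, y, hy, rfl⟩
      have hy' := (ih (by omega)) hy
      rw [Submodule.mem_span_singleton] at hy'
      obtain ⟨c, hc⟩ := hy'
      have hvm : x + (-(φ x)) • e ∈ Ag 1 := (Ag 1).add_mem hx (Submodule.smul_mem _ _ hem)
      have hφv : φ (x + (-(φ x)) • e) = 0 := by
        rw [hφadd x hx _ (Submodule.smul_mem _ _ hem), hφsmul e hem, hφe]
        ring
      have hmx : M.mul x (ch M e k) = φ x • ch M e (k + 1) := by
        have hxe : x = φ x • e + (x + (-(φ x)) • e) := by module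
        conv_lhs => rw [hxe]
        rw [map_add, LinearMap.add_apply, map_smul, LinearMap.smul_apply]
        rw [(hvch _ hvm hφv k (by omega)).1, add_zero]
        rw [← ch_succ M e k (by omega)]
      rw [← hc, map_smul, hmx, smul_smul]
      exact Submodule.smul_mem _ _ (Submodule.mem_span_singleton_self _)
  -- complement basis vectors
  have hfg : ∃ f g : A, (f ∈ Ag 1 ∧ φ f = 0) ∧ (g ∈ Ag 1 ∧ φ g = 0) ∧
      Ag 1 ≤ Submodule.span ℂ {e, f, g} := by
    set T : ↥(Ag 1) →ₗ[ℂ] A := (M.mul.flip x2).comp (Ag 1).subtype with hT_def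
    have hTapp : ∀ u : ↥(Ag 1), T u = M.mul (u : A) x2 := fun u => rfl
    have hrange : LinearMap.range T = Submodule.span ℂ {x3} := by
      apply le_antisymm
      · rintro _ ⟨u, rfl⟩
        rw [hTapp, hφspec (u : A) u.2]
        exact Submodule.smul_mem _ _ (Submodule.mem_span_singleton_self x3)
      · rw [Submodule.span_singleton_le_iff_mem]
        refine ⟨⟨e, hem⟩, ?_⟩
        rw [hTapp, hφspec e hem, hφe, one_smul]
    have hker : Module.finrank ℂ (LinearMap.ker T) = 2 := by
      have hrn := LinearMap.finrank_range_add_finrank_ker T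
      rw [hrange, finrank_span_singleton hx3ne, htype] at hrn
      omega
    have bV := Module.finBasisOfFinrankEq ℂ ↥(LinearMap.ker T) hker
    have hker0 : ∀ u : ↥(LinearMap.ker T), φ (((u : ↥(Ag 1)) : A)) = 0 := by
      intro u
      have h1 : T (u : ↥(Ag 1)) = 0 := u.2
      rw [hTapp, hφspec _ (u : ↥(Ag 1)).2] at h1
      rcases smul_eq_zero.1 h1 with h | h
      · exact h
      · exact absurd h hx3ne
    refine ⟨((bV 0 : ↥(Ag 1)) : A), ((bV 1 : ↥(Ag 1)) : A),
      ⟨(bV 0 : ↥(Ag 1)).2, hker0 (bV 0)⟩, ⟨(bV 1 : ↥(Ag 1)).2, hker0 (bV 1)⟩, ?_⟩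
    intro v hv
    have hwm : v + (-(φ v)) • e ∈ Ag 1 := (Ag 1).add_mem hv (Submodule.smul_mem _ _ hem)
    have hφw : φ (v + (-(φ v)) • e) = 0 := by
      rw [hφadd v hv _ (Submodule.smul_mem _ _ hem), hφsmul e hem, hφe]
      ring
    have hwker : T ⟨v + (-(φ v)) • e, hwm⟩ = 0 := by
      rw [hTapp]
      show M.mul (v + (-(φ v)) • e) x2 = 0
      rw [hφspec _ hwm, hφw, zero_smul]
    have hrepr := bV.sum_repr ⟨⟨v + (-(φ v)) • e, hwm⟩, LinearMap.mem_ker.2 hwker⟩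
    rw [Fin.sum_univ_two] at hrepr
    have hw2 : v + (-(φ v)) • e =
        (bV.repr ⟨⟨v + (-(φ v)) • e, hwm⟩, LinearMap.mem_ker.2 hwker⟩ 0) • ((bV 0 : ↥(Ag 1)) : A)
        + (bV.repr ⟨⟨v + (-(φ v)) • e, hwm⟩, LinearMap.mem_ker.2 hwker⟩ 1) • ((bV 1 : ↥(Ag 1)) : A) := by
      have := congrArg (fun z : ↥(LinearMap.ker T) => ((z : ↥(Ag 1)) : A)) hrepr
      simpa using this.symm
    have hv2 : v = φ v • e + (v + (-(φ v)) • e) := by module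
    rw [hv2, hw2]
    refine Submodule.add_mem _ (Submodule.smul_mem _ _ (Submodule.subset_span (by simp))) ?_
    refine Submodule.add_mem _ (Submodule.smul_mem _ _ (Submodule.subset_span (by simp))) ?_
    exact Submodule.smul_mem _ _ (Submodule.subset_span (by simp))
  obtain ⟨f, g, ⟨hfm, hfφ⟩, ⟨hgm, hgφ⟩, hAg1span⟩ := hfg
  -- assemble the basis
  set b : Fin n → A := fun i =>
    if (i : ℕ) + 1 ≤ t then ch M e ((i : ℕ) + 1) else if (i : ℕ) = t then f else g with hb_def
  have hbi : ∀ i : Fin n, (i : ℕ) + 1 ≤ t → b i = ch M e ((i : ℕ) + 1) := by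
    intro i hi
    simp only [hb_def]
    rw [if_pos hi]
  have hbf : ∀ i : Fin n, (i : ℕ) = t → b i = f := by
    intro i hi
    simp only [hb_def]
    rw [if_neg (by omega), if_pos hi]
  have hbg : ∀ i : Fin n, ¬((i : ℕ) + 1 ≤ t) → (i : ℕ) ≠ t → b i = g := by
    intro i hi hi'
    simp only [hb_def]
    rw [if_neg hi, if_neg hi']
  have hbv : ∀ i : Fin n, ¬((i : ℕ) + 1 ≤ t) → b i ∈ Ag 1 ∧ φ (b i) = 0 := by
    intro i hi
    by_cases h : (i : ℕ) = t
    · rw [hbf i h]; exact ⟨hfm, hfφ⟩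
    · rw [hbg i hi h]; exact ⟨hgm, hgφ⟩
  have hble : ⊤ ≤ Submodule.span ℂ (Set.range b) := by
    rw [← hsupT]
    refine iSup_le fun j => ?_
    rcases Nat.eq_zero_or_pos j with rfl | hj
    · rw [h0]; exact bot_le
    by_cases hjt : j ≤ t
    · rcases Nat.lt_or_ge j 2 with hj1 | hj2
      · have hj1' : j = 1 := by omega
        subst hj1'
        have hes : e ∈ Submodule.span ℂ (Set.range b) := by
          refine Submodule.subset_span ⟨⟨0, by omega⟩, ?_⟩
          rw [hbi ⟨0, by omega⟩ (by omega : (0 : ℕ) + 1 ≤ t)]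
          rfl
        have hfs : f ∈ Submodule.span ℂ (Set.range b) := by
          refine Submodule.subset_span ⟨⟨t, by omega⟩, ?_⟩
          exact hbf ⟨t, by omega⟩ rfl
        have hgs : g ∈ Submodule.span ℂ (Set.range b) := by
          refine Submodule.subset_span ⟨⟨n - 1, by omega⟩, ?_⟩
          exact hbg ⟨n - 1, by omega⟩ (by omega : ¬(n - 1 + 1 ≤ t)) (by omega : n - 1 ≠ t)
        refine hAg1span.trans (Submodule.span_le.2 ?_)
        intro z hz
        rcases hz with rfl | rfl | rfl
        exacts [hes, hfs, hgs]
      · refine (hch1 j hj2 hjt).trans (Submodule.span_le.2 ?_)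
        intro z hz
        rw [Set.mem_singleton_iff] at hz
        subst hz
        refine Submodule.subset_span ⟨⟨j - 1, by omega⟩, ?_⟩
        rw [hbi ⟨j - 1, by omega⟩ (by omega : j - 1 + 1 ≤ t)]
        show ch M e (j - 1 + 1) = ch M e j
        congr 1
        omega
    · rw [hhi j (by omega)]; exact bot_le
  have hcard : Fintype.card (Fin n) = Module.finrank ℂ A := by
    simp [hdim]
  refine ⟨basisOfTopLeSpanOfCardEqFinrank b hble hcard, ?_⟩
  rw [coe_basisOfTopLeSpanOfCardEqFinrank b hble hcard]
  intro i j
  by_cases hi : (i : ℕ) + 1 ≤ t <;> by_cases hj : (j : ℕ) + 1 ≤ t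
  · rw [hbi i hi, hbi j hj]
    have hm2 := ch_mul M e ((i : ℕ) + (j : ℕ) + 2) ((i : ℕ) + 1) ((j : ℕ) + 1)
      (by omega) (by omega) (by omega)
    rw [show (i : ℕ) + 1 + ((j : ℕ) + 1) = (i : ℕ) + (j : ℕ) + 2 by omega,
      show (i : ℕ) + (j : ℕ) + 2 - 1 = (i : ℕ) + (j : ℕ) + 1 by omega] at hm2
    rw [hm2]
    by_cases hij : (i : ℕ) + (j : ℕ) + 2 ≤ n - 2
    · rw [dif_pos hij]
      congr 1
      rw [hbi ⟨(i : ℕ) + (j : ℕ) + 1, by omega⟩ (by show (i : ℕ) + (j : ℕ) + 1 + 1 ≤ t; omega)]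
    · rw [dif_neg hij]
      rw [hchtop ((i : ℕ) + (j : ℕ) + 2) (by omega), smul_zero]
  · obtain ⟨hjm, hjφ⟩ := hbv j hj
    rw [hbi i hi, (hvch (b j) hjm hjφ ((i : ℕ) + 1) (by omega)).2, dif_neg (by omega)]
  · obtain ⟨him, hiφ⟩ := hbv i hi
    rw [hbi j hj, (hvch (b i) him hiφ ((j : ℕ) + 1) (by omega)).1, dif_neg (by omega)]
  · obtain ⟨him, hiφ⟩ := hbv i hi
    obtain ⟨hjm, hjφ⟩ := hbv j hj
    rw [(hzero (b i) him hiφ (b j) hjm).1, dif_neg (by omega)]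

end ZinbielStr
end

section
/- Every 5-dimensional naturally graded quasi-filiform complex Zinbiel algebra of type A_(1) is isomorphic to one of the following three pairwise non-isomorphic algebras (basis e_1, …, e_5; unlisted products of basis vectors are zero): KF_5^1: e_1∘e_1 = e_2, e_1∘e_2 = e_3, e_2∘e_1 = 2e_3 (i.e. e_i∘e_j = C(i+j−1, j)e_{i+j} for 2 ≤ i+j ≤ 3); KF_5^2: e_1∘e_4 = e_2, e_4∘e_1 = −e_2, e_1∘e_2 = e_3; KF_5^3: e_1∘e_4 = e_2, e_4∘e_1 = −e_2, e_1∘e_2 = e_3, e_5∘e_2 = e_3. -/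
set_option maxHeartbeats 1000000


namespace ZinbielStr

variable {A : Type*} [AddCommGroup A] [Module ℂ A]

lemma aux_sup1 (Ag : ℕ → Submodule ℂ A) (h4 : ∀ k, 3 < k → Ag k = ⊥) :
    (⨆ j, ⨆ (_ : 1 ≤ j), Ag j) = Ag 1 ⊔ (Ag 2 ⊔ Ag 3) := by
  apply le_antisymm
  · refine iSup₂_le fun j hj => ?_
    match j, hj with
    | 1, _ => exact le_sup_left
    | 2, _ => exact le_sup_of_le_right le_sup_left
    | 3, _ => exact le_sup_of_le_right le_sup_right
    | (n+4), _ => rw [h4 (n+4) (by omega)]; exact bot_le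
  · refine sup_le ?_ (sup_le ?_ ?_) <;>
      exact le_iSup₂ (f := fun j (_ : 1 ≤ j) => Ag j) _ (by norm_num)

lemma aux_sup2 (Ag : ℕ → Submodule ℂ A) (h4 : ∀ k, 3 < k → Ag k = ⊥) :
    (⨆ j, ⨆ (_ : 2 ≤ j), Ag j) = Ag 2 ⊔ Ag 3 := by
  apply le_antisymm
  · refine iSup₂_le fun j hj => ?_
    match j, hj with
    | 1, h => exact absurd h (by omega)
    | 2, _ => exact le_sup_left
    | 3, _ => exact le_sup_right
    | (n+4), _ => rw [h4 (n+4) (by omega)]; exact bot_le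
  · refine sup_le ?_ ?_ <;>
      exact le_iSup₂ (f := fun j (_ : 2 ≤ j) => Ag j) _ (by norm_num)

lemma aux_sup3 (Ag : ℕ → Submodule ℂ A) (h4 : ∀ k, 3 < k → Ag k = ⊥) :
    (⨆ j, ⨆ (_ : 3 ≤ j), Ag j) = Ag 3 := by
  apply le_antisymm
  · refine iSup₂_le fun j hj => ?_
    match j, hj with
    | 1, h => exact absurd h (by omega)
    | 2, h => exact absurd h (by omega)
    | 3, _ => exact le_rfl
    | (n+4), _ => rw [h4 (n+4) (by omega)]; exact bot_le
  · exact le_iSup₂ (f := fun j (_ : 3 ≤ j) => Ag j) 3 (by norm_num)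

lemma aux_span_singleton_of_finrank_one [FiniteDimensional ℂ A]
    (S : Submodule ℂ A) (h : Module.finrank ℂ S = 1) :
    ∃ v : A, v ≠ 0 ∧ v ∈ S ∧ S = Submodule.span ℂ {v} := by
  obtain ⟨v, hv0, hv⟩ := finrank_eq_one_iff'.mp h
  refine ⟨(v : A), by simpa using hv0, v.2, le_antisymm ?_ ?_⟩
  · intro w hw
    obtain ⟨c, hc⟩ := hv ⟨w, hw⟩
    exact Submodule.mem_span_singleton.mpr ⟨c, by simpa using congrArg (Subtype.val) hc⟩
  · rw [Submodule.span_singleton_le_iff_mem]; exact v.2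


def tbl (e : Fin 5 → A) : Fin 3 → Fin 5 → Fin 5 → A :=
        ![![![e 1, e 2, 0, 0, 0],
         ![(2 : ℂ) • e 2, 0, 0, 0, 0],
         ![0, 0, 0, 0, 0],
         ![0, 0, 0, 0, 0],
         ![0, 0, 0, 0, 0]],
          ![![0, e 2, 0, e 1, 0],
         ![0, 0, 0, 0, 0],
         ![0, 0, 0, 0, 0],
         ![-e 1, 0, 0, 0, 0],
         ![0, 0, 0, 0, 0]],
          ![![0, e 2, 0, e 1, 0],
         ![0, 0, 0, 0, 0],
         ![0, 0, 0, 0, 0],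
         ![-e 1, 0, 0, 0, 0],
         ![0, e 2, 0, 0, 0]]]

lemma aux_tbl_mem' (e : Fin 5 → A) (S : Submodule ℂ A) (h1 : e 1 ∈ S) (h2 : e 2 ∈ S)
    (k : Fin 3) (i j : Fin 5) : tbl e k i j ∈ S := by
  fin_cases k <;> fin_cases i <;> fin_cases j <;>
    simp only [tbl, Matrix.cons_val_zero, Matrix.cons_val_one, Matrix.cons_val_two,
      Matrix.cons_val_three, Matrix.cons_val_four, Matrix.vecHead, Matrix.vecTail,
      Matrix.cons_val_succ, Function.comp] <;>
  first
    | exact S.zero_mem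
    | exact h1
    | exact h2
    | exact S.neg_mem h1
    | exact S.smul_mem _ h2

lemma aux_tbl_mem (e : Fin 5 → A) (k : Fin 3) (i j : Fin 5) :
    tbl e k i j ∈ Submodule.span ℂ {e 1, e 2} := by
  refine aux_tbl_mem' e _ ?_ ?_ k i j <;> exact Submodule.subset_span (by simp)





lemma aux_lcs_two (M : ZinbielStr A) :
    M.lcs 2 = Submodule.span ℂ {z | ∃ a b, z = M.mul a b} := by
  show Submodule.span ℂ _ = _
  congr 1
  ext z
  simp [lcs]

lemma aux_lcs_three (M : ZinbielStr A) :
    M.lcs 3 = Submodule.span ℂ {z | ∃ a b, b ∈ M.lcs 2 ∧ z = M.mul a b} := rfl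

lemma aux_lin_mem {ι : Type*} (e : Module.Basis ι ℂ A) (f : A →ₗ[ℂ] A)
    {S : Submodule ℂ A} (h : ∀ i, f (e i) ∈ S) : ∀ x, f x ∈ S := by
  intro x
  have hle : ⊤ ≤ Submodule.comap f S := by
    rw [← e.span_eq]
    refine Submodule.span_le.mpr ?_
    rintro _ ⟨i, rfl⟩
    simpa using h i
  simpa using hle (Submodule.mem_top (x := x))

lemma aux_mul_right_mem (M : ZinbielStr A) {ι : Type*} (e : Module.Basis ι ℂ A)
    {S : Submodule ℂ A} (y : A) (h : ∀ i, M.mul (e i) y ∈ S) : ∀ x, M.mul x y ∈ S := by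
  have := aux_lin_mem e (M.mul.flip y) (by simpa using h)
  simpa using this

lemma aux_mul_left_mem (M : ZinbielStr A) {ι : Type*} (e : Module.Basis ι ℂ A)
    {S : Submodule ℂ A} (x : A) (h : ∀ j, M.mul x (e j) ∈ S) : ∀ y, M.mul x y ∈ S :=
  aux_lin_mem e (M.mul x) h

lemma aux_mul_mem (M : ZinbielStr A) {ι : Type*} (e : Module.Basis ι ℂ A)
    {S : Submodule ℂ A} (h : ∀ i j, M.mul (e i) (e j) ∈ S) : ∀ x y, M.mul x y ∈ S := by
  intro x y
  exact aux_mul_right_mem M e y (fun i => aux_mul_left_mem M e (e i) (h i) y) x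

lemma aux_not_mem_span (e : Module.Basis (Fin 5) ℂ A) {i j : Fin 5} (h : i ≠ j) :
    e i ∉ Submodule.span ℂ {e j} := by
  have := e.linearIndependent.notMem_span_image (s := {j}) (by simpa using h)
  simpa using this

lemma aux_smul_mem_cancel {S : Submodule ℂ A} {c : ℂ} {v : A}
    (h : c • v ∈ S) (hv : v ∉ S) : c = 0 := by
  by_contra hc
  exact hv (by simpa [smul_smul, inv_mul_cancel₀ hc] using S.smul_mem c⁻¹ h)

lemma aux_expand (M : ZinbielStr A) (e : Module.Basis (Fin 5) ℂ A) (x y : A) :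
    M.mul x y = ∑ i, e.repr x i • M.mul (e i) y := by
  conv_lhs => rw [← e.sum_repr x]
  rw [map_sum M.mul, LinearMap.sum_apply]
  congr 1
  ext i
  rw [map_smul, LinearMap.smul_apply]

lemma aux_lcs2_eq (M : ZinbielStr A) (e : Module.Basis (Fin 5) ℂ A) (k : Fin 3)
    (h : ∀ i j, M.mul (e i) (e j) = tbl (⇑e) k i j) :
    M.lcs 2 = Submodule.span ℂ {e 1, e 2} := by
  apply le_antisymm
  · rw [aux_lcs_two]
    refine Submodule.span_le.mpr ?_
    rintro z ⟨a, b, rfl⟩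
    exact aux_mul_mem M e (fun i j => h i j ▸ aux_tbl_mem (⇑e) k i j) a b
  · refine Submodule.span_le.mpr ?_
    rintro z hz
    rw [aux_lcs_two]
    rcases hz with rfl | hz
    · -- z = e 1
      fin_cases k
      · exact Submodule.subset_span ⟨e 0, e 0, by rw [h 0 0]; rfl⟩
      · exact Submodule.subset_span ⟨e 0, e 3, by rw [h 0 3]; rfl⟩
      · exact Submodule.subset_span ⟨e 0, e 3, by rw [h 0 3]; rfl⟩
    · rcases hz with rfl
      fin_cases k
      · exact Submodule.subset_span ⟨e 0, e 1, by rw [h 0 1]; rfl⟩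
      · exact Submodule.subset_span ⟨e 0, e 1, by rw [h 0 1]; rfl⟩
      · exact Submodule.subset_span ⟨e 0, e 1, by rw [h 0 1]; rfl⟩

lemma aux_col2 (M : ZinbielStr A) (e : Module.Basis (Fin 5) ℂ A) (k : Fin 3)
    (h : ∀ i j, M.mul (e i) (e j) = tbl (⇑e) k i j) :
    ∀ x, M.mul x (e 2) = 0 := by
  intro x
  have : ∀ x, M.mul x (e 2) ∈ (⊥ : Submodule ℂ A) := by
    refine aux_mul_right_mem M e (e 2) ?_
    intro i
    rw [h i 2]
    fin_cases k <;> fin_cases i <;> simp [tbl, Matrix.vecHead, Matrix.vecTail]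
  simpa using this x

lemma aux_col1 (M : ZinbielStr A) (e : Module.Basis (Fin 5) ℂ A) (k : Fin 3)
    (h : ∀ i j, M.mul (e i) (e j) = tbl (⇑e) k i j) :
    ∀ x, M.mul x (e 1) ∈ Submodule.span ℂ {e 2} := by
  refine aux_mul_right_mem M e (e 1) ?_
  intro i
  rw [h i 1]
  fin_cases k <;> fin_cases i <;> simp [tbl, Matrix.vecHead, Matrix.vecTail] <;>
    exact Submodule.mem_span_singleton_self _

lemma aux_lcs3_eq (M : ZinbielStr A) (e : Module.Basis (Fin 5) ℂ A) (k : Fin 3)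
    (h : ∀ i j, M.mul (e i) (e j) = tbl (⇑e) k i j) :
    M.lcs 3 = Submodule.span ℂ {e 2} := by
  apply le_antisymm
  · rw [aux_lcs_three]
    refine Submodule.span_le.mpr ?_
    rintro z ⟨a, b, hb, rfl⟩
    rw [aux_lcs2_eq M e k h] at hb
    obtain ⟨c, d, rfl⟩ := Submodule.mem_span_pair.mp hb
    rw [map_add, map_smul, map_smul, aux_col2 M e k h, smul_zero, add_zero]
    exact Submodule.smul_mem _ _ (aux_col1 M e k h a)
  · refine Submodule.span_le.mpr ?_
    rintro z rfl
    rw [aux_lcs_three]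
    refine Submodule.subset_span ⟨e 0, e 1, ?_, ?_⟩
    · rw [aux_lcs2_eq M e k h]
      exact Submodule.subset_span (by simp)
    · rw [h 0 1]
      fin_cases k <;> rfl





lemma aux_sq_mem (M : ZinbielStr A) (e : Module.Basis (Fin 5) ℂ A) (k : Fin 3) (hk : k ≠ 0)
    (h : ∀ i j, M.mul (e i) (e j) = tbl (⇑e) k i j) :
    ∀ x, M.mul x x ∈ M.lcs 3 := by
  have hsym : ∀ x y, M.mul x y + M.mul y x ∈ Submodule.span ℂ {e 2} := by
    have hb : ∀ i j, M.mul (e i) (e j) + M.mul (e j) (e i) ∈ Submodule.span ℂ {e 2} := by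
      intro i j
      rw [h i j, h j i]
      fin_cases k
      · exact absurd rfl hk
      all_goals fin_cases i <;> fin_cases j <;>
        simp [tbl, Matrix.vecHead, Matrix.vecTail] <;>
        exact Submodule.mem_span_singleton_self _
    intro x y
    have step1 : ∀ i, ∀ y, M.mul (e i) y + M.mul y (e i) ∈ Submodule.span ℂ {e 2} := by
      intro i
      have := aux_lin_mem e (M.mul (e i) + M.mul.flip (e i)) (S := Submodule.span ℂ {e 2})
        (by intro j; simpa using hb i j)
      intro y; simpa using this y
    have := aux_lin_mem e (M.mul.flip y + M.mul y) (S := Submodule.span ℂ {e 2})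
      (by intro i; simpa [add_comm] using step1 i y)
    simpa [add_comm] using this x
  intro x
  rw [aux_lcs3_eq M e k h]
  have h2 : M.mul x x = (2⁻¹ : ℂ) • (M.mul x x + M.mul x x) := by
    rw [← two_smul ℂ, smul_smul]
    norm_num
  rw [h2]
  exact Submodule.smul_mem _ _ (hsym x x)

lemma aux_sq_notmem (M : ZinbielStr A) (e : Module.Basis (Fin 5) ℂ A)
    (h : ∀ i j, M.mul (e i) (e j) = tbl (⇑e) 0 i j) :
    ∃ x, M.mul x x ∉ M.lcs 3 := by
  refine ⟨e 0, ?_⟩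
  rw [aux_lcs3_eq M e 0 h, h 0 0]
  show (e 1) ∉ _
  exact aux_not_mem_span e (by decide)

lemma aux_inv2_holds (M : ZinbielStr A) (e : Module.Basis (Fin 5) ℂ A)
    (h : ∀ i j, M.mul (e i) (e j) = tbl (⇑e) 1 i j) :
    ∀ x, (∀ y, M.mul x y ∈ M.lcs 3 ∧ M.mul y x ∈ M.lcs 3) →
      ∀ z ∈ M.lcs 2, M.mul x z = 0 := by
  intro x hx z hz
  have hc0 : e.repr x 0 = 0 := by
    have h3 : M.mul x (e 3) = e.repr x 0 • e 1 := by
      rw [aux_expand M e x (e 3), Fin.sum_univ_five]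
      rw [h 0 3, h 1 3, h 2 3, h 3 3, h 4 3]
      simp [tbl, Matrix.vecHead, Matrix.vecTail]
    have hmem := (hx (e 3)).1
    rw [aux_lcs3_eq M e 1 h, h3] at hmem
    exact aux_smul_mem_cancel hmem (aux_not_mem_span e (by decide))
  have he1 : M.mul x (e 1) = 0 := by
    rw [aux_expand M e x (e 1), Fin.sum_univ_five]
    rw [h 0 1, h 1 1, h 2 1, h 3 1, h 4 1]
    simp [tbl, Matrix.vecHead, Matrix.vecTail, hc0]
  have he2 : M.mul x (e 2) = 0 := aux_col2 M e 1 h x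
  rw [aux_lcs2_eq M e 1 h] at hz
  obtain ⟨c, d, rfl⟩ := Submodule.mem_span_pair.mp hz
  rw [map_add, map_smul, map_smul, he1, he2, smul_zero, smul_zero, add_zero]

lemma aux_inv2_fails (M : ZinbielStr A) (e : Module.Basis (Fin 5) ℂ A)
    (h : ∀ i j, M.mul (e i) (e j) = tbl (⇑e) 2 i j) :
    ¬ (∀ x, (∀ y, M.mul x y ∈ M.lcs 3 ∧ M.mul y x ∈ M.lcs 3) →
      ∀ z ∈ M.lcs 2, M.mul x z = 0) := by
  intro H
  have h41 : M.mul (e 4) (e 1) = e 2 := by rw [h 4 1]; rfl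
  have hmem : ∀ y, M.mul (e 4) y ∈ M.lcs 3 ∧ M.mul y (e 4) ∈ M.lcs 3 := by
    intro y
    rw [aux_lcs3_eq M e 2 h]
    constructor
    · refine aux_mul_left_mem M e (e 4) ?_ y
      intro j
      rw [h 4 j]
      fin_cases j <;> simp [tbl, Matrix.vecHead, Matrix.vecTail] <;>
        exact Submodule.mem_span_singleton_self _
    · refine aux_mul_right_mem M e (e 4) ?_ y
      intro i
      rw [h i 4]
      fin_cases i <;> simp [tbl, Matrix.vecHead, Matrix.vecTail]
  have he1mem : e 1 ∈ M.lcs 2 := by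
    rw [aux_lcs2_eq M e 2 h]
    exact Submodule.subset_span (by simp)
  have := H (e 4) hmem (e 1) he1mem
  rw [h41] at this
  exact e.ne_zero 2 this

lemma aux_unique (M : ZinbielStr A) (e f : Module.Basis (Fin 5) ℂ A) (j k : Fin 3)
    (he : ∀ i i' : Fin 5, M.mul (e i) (e i') = tbl (⇑e) j i i')
    (hf : ∀ i i' : Fin 5, M.mul (f i) (f i') = tbl (⇑f) k i i') :
    j = k := by
  have sep0 : ∀ (g g' : Module.Basis (Fin 5) ℂ A) (m : Fin 3), m ≠ 0 →
      (∀ i i' : Fin 5, M.mul (g i) (g i') = tbl (⇑g) 0 i i') →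
      (∀ i i' : Fin 5, M.mul (g' i) (g' i') = tbl (⇑g') m i i') → False := by
    intro g g' m hm hg hg'
    obtain ⟨x, hx⟩ := aux_sq_notmem M g hg
    exact hx (aux_sq_mem M g' m hm hg' x)
  fin_cases j <;> fin_cases k
  · rfl
  · exact (sep0 e f 1 (by decide) he hf).elim
  · exact (sep0 e f 2 (by decide) he hf).elim
  · exact (sep0 f e 1 (by decide) hf he).elim
  · rfl
  · exact (aux_inv2_fails M f hf (aux_inv2_holds M e he)).elim
  · exact (sep0 f e 2 (by decide) hf he).elim
  · exact (aux_inv2_fails M e he (aux_inv2_holds M f hf)).elim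
  · rfl


/-- Every 5-dimensional naturally graded quasi-filiform complex Zinbiel algebra of
type `A_(1)` is isomorphic to exactly one of the three pairwise non-isomorphic
algebras `KF_5^1`, `KF_5^2`, `KF_5^3`. -/
theorem dim5_type_one_classification {A : Type*} [AddCommGroup A] [Module ℂ A]
    [FiniteDimensional ℂ A] (M : ZinbielStr A)
    (Ag : ℕ → Submodule ℂ A)
    (hqf : M.IsQuasiFiliform 5) (hg : M.IsNaturalGrading 3 Ag)
    (htype : Module.finrank ℂ (Ag 1) = 3) :
    ∃! k : Fin 3, ∃ e : Module.Basis (Fin 5) ℂ A, ∀ i j : Fin 5,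
      M.mul (e i) (e j) =
        ![![![e 1, e 2, 0, 0, 0],
         ![(2 : ℂ) • e 2, 0, 0, 0, 0],
         ![0, 0, 0, 0, 0],
         ![0, 0, 0, 0, 0],
         ![0, 0, 0, 0, 0]],
          ![![0, e 2, 0, e 1, 0],
         ![0, 0, 0, 0, 0],
         ![0, 0, 0, 0, 0],
         ![-e 1, 0, 0, 0, 0],
         ![0, 0, 0, 0, 0]],
          ![![0, e 2, 0, e 1, 0],
         ![0, 0, 0, 0, 0],
         ![0, 0, 0, 0, 0],
         ![-e 1, 0, 0, 0, 0],
         ![0, e 2, 0, 0, 0]]] k i j := by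
  classical
  obtain ⟨h5, hne3, hbot4⟩ := hqf
  have hAg4 : ∀ k, 3 < k → Ag k = ⊥ := hg.high_deg
  have htop : Ag 1 ⊔ (Ag 2 ⊔ Ag 3) = ⊤ := by
    have h1 := hg.lcs_eq 1 le_rfl (by norm_num)
    rw [show M.lcs 1 = ⊤ from rfl, aux_sup1 Ag hAg4] at h1
    exact h1.symm
  have hlcs2 : M.lcs 2 = Ag 2 ⊔ Ag 3 := by
    rw [hg.lcs_eq 2 (by norm_num) (by norm_num), aux_sup2 Ag hAg4]
  have hlcs3 : M.lcs 3 = Ag 3 := by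
    rw [hg.lcs_eq 3 (by norm_num) (by norm_num), aux_sup3 Ag hAg4]
  have hAg3ne : Ag 3 ≠ ⊥ := by rw [← hlcs3]; exact hne3
  have hdisj1 : Disjoint (Ag 1) (Ag 2 ⊔ Ag 3) := by
    refine (hg.indep 1).mono_right (sup_le ?_ ?_) <;>
      exact le_iSup₂ (f := fun j (_ : j ≠ 1) => Ag j) _ (by norm_num)
  have hdisj23 : Disjoint (Ag 2) (Ag 3) :=
    (hg.indep 2).mono_right (le_iSup₂ (f := fun j (_ : j ≠ 2) => Ag j) 3 (by norm_num))
  have allmem : ∀ S : Submodule ℂ A, Ag 1 ≤ S → Ag 2 ≤ S → Ag 3 ≤ S → ∀ x : A, x ∈ S := by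
    intro S h1 h2 h3 x
    have : ⊤ ≤ S := by rw [← htop]; exact sup_le h1 (sup_le h2 h3)
    exact this trivial
  have hmulbot : ∀ i j : ℕ, 3 < i + j → ∀ x ∈ Ag i, ∀ y ∈ Ag j, M.mul x y = 0 := by
    intro i j hij x hx y hy
    have hm := hg.mul_mem i j x y hx hy
    rw [hAg4 _ hij] at hm
    simpa using hm
  have hmul3r : ∀ y ∈ Ag 3, ∀ x, M.mul x y = 0 := by
    intro y hy x
    have hker : ∀ x, x ∈ LinearMap.ker (M.mul.flip y) := by
      refine allmem _ ?_ ?_ ?_ <;> intro z hz <;>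
        simp only [LinearMap.mem_ker, LinearMap.flip_apply]
      · exact hmulbot 1 3 (by norm_num) z hz y hy
      · exact hmulbot 2 3 (by norm_num) z hz y hy
      · exact hmulbot 3 3 (by norm_num) z hz y hy
    simpa using hker x
  have hmul3l : ∀ y ∈ Ag 3, ∀ x, M.mul y x = 0 := by
    intro y hy x
    have hker : ∀ x, x ∈ LinearMap.ker (M.mul y) := by
      refine allmem _ ?_ ?_ ?_ <;> intro z hz <;> simp only [LinearMap.mem_ker]
      · exact hmulbot 3 1 (by norm_num) y hy z hz
      · exact hmulbot 3 2 (by norm_num) y hy z hz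
      · exact hmulbot 3 3 (by norm_num) y hy z hz
    simpa using hker x
  have hfr_top : Module.finrank ℂ (⊤ : Submodule ℂ A) = 5 := by rw [finrank_top]; exact h5
  have hr23 : Module.finrank ℂ ↥(Ag 2 ⊔ Ag 3) = 2 := by
    have hh := Submodule.finrank_sup_add_finrank_inf_eq (Ag 1) (Ag 2 ⊔ Ag 3)
    rw [htop, hdisj1.eq_bot, htype, hfr_top] at hh
    simp only [finrank_bot, add_zero] at hh
    omega
  have hsum23 : Module.finrank ℂ (Ag 2) + Module.finrank ℂ (Ag 3) = 2 := by
    have hh := Submodule.finrank_sup_add_finrank_inf_eq (Ag 2) (Ag 3)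
    rw [hdisj23.eq_bot, hr23] at hh
    simpa using hh.symm
  have hAg2ne : Ag 2 ≠ ⊥ := by
    intro h2
    apply hAg3ne
    rw [← hlcs3]
    refine le_bot_iff.mp ?_
    rw [aux_lcs_three]
    refine Submodule.span_le.mpr ?_
    rintro z ⟨a, b, hb, rfl⟩
    rw [hlcs2, h2, bot_sup_eq] at hb
    simp [hmul3r b hb a]
  have hd3 : Module.finrank ℂ (Ag 3) = 1 := by
    have h3pos : Module.finrank ℂ (Ag 3) ≠ 0 := by
      rw [ne_eq, Submodule.finrank_eq_zero]; exact hAg3ne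
    have h2pos : Module.finrank ℂ (Ag 2) ≠ 0 := by
      rw [ne_eq, Submodule.finrank_eq_zero]; exact hAg2ne
    omega
  have hd2 : Module.finrank ℂ (Ag 2) = 1 := by
    have h2pos : Module.finrank ℂ (Ag 2) ≠ 0 := by
      rw [ne_eq, Submodule.finrank_eq_zero]; exact hAg2ne
    omega
  obtain ⟨e3, he3ne, he3mem, he3span⟩ := aux_span_singleton_of_finrank_one (Ag 3) hd3
  obtain ⟨e2, he2ne, he2mem, he2span⟩ := aux_span_singleton_of_finrank_one (Ag 2) hd2
  have he2e2 : M.mul e2 e2 = 0 := hmulbot 2 2 (by norm_num) e2 he2mem e2 he2mem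
  set w : Module.Basis (Fin 3) ℂ (Ag 1) := Module.finBasisOfFinrankEq ℂ (Ag 1) htype with hwdef
  set v : Fin 3 → A := fun i => ((w i : Ag 1) : A) with hvdef
  have hvm : ∀ i, v i ∈ Ag 1 := fun i => (w i).2
  have vext : ∀ a b c : ℂ, a • v 0 + b • v 1 + c • v 2 = 0 → a = 0 ∧ b = 0 ∧ c = 0 := by
    intro a b c h
    have hcoe : ((a • w 0 + b • w 1 + c • w 2 : Ag 1) : A) = a • v 0 + b • v 1 + c • v 2 := by
      push_cast
      rfl
    have hin : (a • w 0 + b • w 1 + c • w 2 : Ag 1) = 0 := by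
      have h0 : ((a • w 0 + b • w 1 + c • w 2 : Ag 1) : A) = 0 := by rw [hcoe]; exact h
      exact_mod_cast h0
    have hli3 := Fintype.linearIndependent_iff.mp w.linearIndependent ![a, b, c] (by
      rw [Fin.sum_univ_three]
      simpa using hin)
    exact ⟨hli3 0, hli3 1, hli3 2⟩
  have hAg1span : Ag 1 = Submodule.span ℂ (Set.range v) := by
    conv_lhs => rw [← Submodule.map_subtype_top (Ag 1), ← w.span_eq]
    rw [Submodule.map_span]
    congr 1
    rw [← Set.range_comp]
    rfl
  have mem1 : ∀ S : Submodule ℂ A, v 0 ∈ S → v 1 ∈ S → v 2 ∈ S → Ag 1 ≤ S := by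
    intro S h0 h1 h2
    rw [hAg1span]
    refine Submodule.span_le.mpr ?_
    rintro _ ⟨i, rfl⟩
    fin_cases i <;> assumption
  have comp0 : ∀ x1 ∈ Ag 1, ∀ x2 ∈ Ag 2, ∀ x3 ∈ Ag 3,
      x1 + x2 + x3 = 0 → x1 = 0 ∧ x2 = 0 ∧ x3 = 0 := by
    intro x1 hx1 x2 hx2 x3 hx3 hs
    have h1 : x1 = 0 := by
      have hx1' : x1 = -(x2 + x3) := by
        rw [eq_neg_iff_add_eq_zero, ← add_assoc]; exact hs
      have hmem : x1 ∈ Ag 2 ⊔ Ag 3 := by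
        rw [hx1']
        exact neg_mem (add_mem (Submodule.mem_sup_left hx2) (Submodule.mem_sup_right hx3))
      exact (Submodule.disjoint_def.mp hdisj1) x1 hx1 hmem
    have h2 : x2 = 0 := by
      have hx2' : x2 = -x3 := by
        rw [eq_neg_iff_add_eq_zero]
        rw [h1, zero_add] at hs
        exact hs
      have hmem : x2 ∈ Ag 3 := by rw [hx2']; exact neg_mem hx3
      exact (Submodule.disjoint_def.mp hdisj23) x2 hx2 hmem
    refine ⟨h1, h2, ?_⟩
    rw [h1, h2, zero_add, zero_add] at hs
    exact hs

  have hli : LinearIndependent ℂ ![v 0, v 1, v 2, e2, e3] := by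
    rw [Fintype.linearIndependent_iff]
    intro g hg5
    rw [Fin.sum_univ_five] at hg5
    simp only [Matrix.cons_val_zero, Matrix.cons_val_one, Matrix.cons_val_two,
      Matrix.cons_val_three, Matrix.cons_val_four, Matrix.vecHead, Matrix.vecTail,
      Matrix.cons_val_succ, Function.comp] at hg5
    have hre : (g 0 • v 0 + g 1 • v 1 + g 2 • v 2) + g 3 • e2 + g 4 • e3 = 0 := by
      rw [← hg5]
    obtain ⟨p1, p2, p3⟩ := comp0 _
      (add_mem (add_mem (Submodule.smul_mem _ _ (hvm 0)) (Submodule.smul_mem _ _ (hvm 1)))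
        (Submodule.smul_mem _ _ (hvm 2)))
      _ (Submodule.smul_mem _ _ he2mem) _ (Submodule.smul_mem _ _ he3mem) hre
    obtain ⟨q0, q1, q2⟩ := vext _ _ _ p1
    have q3 : g 3 = 0 := by
      rcases smul_eq_zero.mp p2 with h | h
      · exact h
      · exact absurd h he2ne
    have q4 : g 4 = 0 := by
      rcases smul_eq_zero.mp p3 with h | h
      · exact h
      · exact absurd h he3ne
    intro i
    fin_cases i <;> assumption
  obtain ⟨b0, hb0⟩ : ∃ b : Module.Basis (Fin 5) ℂ A, ⇑b = ![v 0, v 1, v 2, e2, e3] :=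
    ⟨basisOfLinearIndependentOfCardEqFinrank hli (by simp [h5]),
     coe_basisOfLinearIndependentOfCardEqFinrank _ _⟩
  set π2 : A →ₗ[ℂ] ℂ := b0.coord 3 with hπ2def
  set π3 : A →ₗ[ℂ] ℂ := b0.coord 4 with hπ3def
  have hb0_3 : b0 3 = e2 := by rw [show b0 3 = (⇑b0) 3 from rfl, hb0]; rfl
  have hb0_4 : b0 4 = e3 := by rw [show b0 4 = (⇑b0) 4 from rfl, hb0]; rfl
  have hπ2e2 : π2 e2 = 1 := by
    rw [← hb0_3, hπ2def, Module.Basis.coord_apply, Module.Basis.repr_self]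
    simp
  have hπ2e3 : π2 e3 = 0 := by
    rw [← hb0_4, hπ2def, Module.Basis.coord_apply, Module.Basis.repr_self]
    simp
  have hπ3e3 : π3 e3 = 1 := by
    rw [← hb0_4, hπ3def, Module.Basis.coord_apply, Module.Basis.repr_self]
    simp
  have hπ3e2 : π3 e2 = 0 := by
    rw [← hb0_3, hπ3def, Module.Basis.coord_apply, Module.Basis.repr_self]
    simp
  -- description of elements of Ag 2 and Ag 3 via coordinates
  have sp2 : ∀ u ∈ Ag 2, u = π2 u • e2 ∧ π3 u = 0 := by
    intro u hu
    rw [he2span] at hu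
    obtain ⟨c, rfl⟩ := Submodule.mem_span_singleton.mp hu
    rw [map_smul, map_smul, hπ2e2, hπ3e2]
    constructor
    · simp
    · simp
  have sp3 : ∀ u ∈ Ag 3, u = π3 u • e3 ∧ π2 u = 0 := by
    intro u hu
    rw [he3span] at hu
    obtain ⟨c, rfl⟩ := Submodule.mem_span_singleton.mp hu
    rw [map_smul, map_smul, hπ2e3, hπ3e3]
    constructor
    · simp
    · simp
  have sp23 : ∀ u ∈ Ag 2 ⊔ Ag 3, u = π2 u • e2 + π3 u • e3 := by
    intro u hu
    obtain ⟨p, hp, q, hq, rfl⟩ := Submodule.mem_sup.mp hu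
    obtain ⟨hp1, hp2⟩ := sp2 p hp
    obtain ⟨hq1, hq2⟩ := sp3 q hq
    rw [map_add, map_add, hp2, hq2]
    rw [add_zero, zero_add]
    nth_rewrite 1 [hp1, hq1]
    rfl
  set L : A →ₗ[ℂ] ℂ := π3 ∘ₗ (M.mul.flip e2) with hLdef
  set R : A →ₗ[ℂ] ℂ := π3 ∘ₗ (M.mul e2) with hRdef
  set βm : A →ₗ[ℂ] A →ₗ[ℂ] ℂ := M.mul.compr₂ π2 with hβdef
  have hLa : ∀ x, L x = π3 (M.mul x e2) := fun x => by
    rw [hLdef]; simp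
  have hRa : ∀ x, R x = π3 (M.mul e2 x) := fun x => by rw [hRdef]; simp
  have hβa : ∀ x y, βm x y = π2 (M.mul x y) := fun x y => by rw [hβdef]; simp
  have hprod2 : ∀ x y, M.mul x y ∈ Ag 2 ⊔ Ag 3 := by
    intro x y
    rw [← hlcs2, aux_lcs_two]
    exact Submodule.subset_span ⟨x, y, rfl⟩
  have hdecomp : ∀ x y, M.mul x y = βm x y • e2 + π3 (M.mul x y) • e3 := by
    intro x y
    rw [hβa]
    exact sp23 _ (hprod2 x y)
  have hβe2r : ∀ x, βm x e2 = 0 := by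
    intro x
    have hker : ∀ x, x ∈ LinearMap.ker (βm.flip e2) := by
      refine allmem _ ?_ ?_ ?_ <;> intro z hz <;>
        simp only [LinearMap.mem_ker, LinearMap.flip_apply, hβa]
      · exact (sp3 _ (by simpa using hg.mul_mem 1 2 z e2 hz he2mem)).2
      · rw [hmulbot 2 2 (by norm_num) z hz e2 he2mem]; exact map_zero π2
      · rw [hmul3l z hz e2]; exact map_zero π2
    simpa using hker x
  have hβe2l : ∀ x, βm e2 x = 0 := by
    intro x
    have hker : ∀ x, x ∈ LinearMap.ker (βm e2) := by
      refine allmem _ ?_ ?_ ?_ <;> intro z hz <;> simp only [LinearMap.mem_ker, hβa]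
      · exact (sp3 _ (by simpa using hg.mul_mem 2 1 e2 z he2mem hz)).2
      · rw [hmulbot 2 2 (by norm_num) e2 he2mem z hz]; exact map_zero π2
      · rw [hmul3r z hz e2]; exact map_zero π2
    simpa using hker x
  have hβe3r : ∀ x, βm x e3 = 0 := fun x => by
    rw [hβa, hmul3r e3 he3mem x]; exact map_zero π2
  have hβe3l : ∀ x, βm e3 x = 0 := fun x => by
    rw [hβa, hmul3l e3 he3mem x]; exact map_zero π2
  have hF3 : ∀ x, M.mul x e2 = L x • e3 := by
    intro x
    rw [hLa]
    have := hdecomp x e2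
    rwa [hβe2r, zero_smul, zero_add] at this
  have hF4 : ∀ x, M.mul e2 x = R x • e3 := by
    intro x
    rw [hRa]
    have := hdecomp e2 x
    rwa [hβe2l, zero_smul, zero_add] at this
  have hF6 : ∀ x ∈ Ag 1, ∀ y ∈ Ag 1, M.mul x y = βm x y • e2 := by
    intro x hx y hy
    rw [hβa]
    exact (sp2 _ (by simpa using hg.mul_mem 1 1 x y hx hy)).1
  have ecan : ∀ c d : ℂ, c • e3 = d • e3 → c = d := by
    intro c d h
    have : (c - d) • e3 = 0 := by rw [sub_smul, h, sub_self]
    rcases smul_eq_zero.mp this with h' | h'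
    · exact sub_eq_zero.mp h'
    · exact absurd h' he3ne
  have hLe2 : L e2 = 0 := by rw [hLa, he2e2]; exact map_zero π3
  have hLe3 : L e3 = 0 := by rw [hLa, hmul3l e3 he3mem e2]; exact map_zero π3
  have hRe2 : R e2 = 0 := by rw [hRa, he2e2]; exact map_zero π3
  have hRe3 : R e3 = 0 := by rw [hRa, hmul3r e3 he3mem e2]; exact map_zero π3
  have KEY : ∀ x y z, βm x y * R z = L x * (βm y z + βm z y) := by
    intro x y z
    have hz := M.zinbiel x y z
    -- LHS
    have hlhs : M.mul (M.mul x y) z = (βm x y * R z) • e3 := by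
      nth_rewrite 1 [hdecomp x y]
      rw [map_add, LinearMap.add_apply, map_smul, LinearMap.smul_apply,
        map_smul, LinearMap.smul_apply, hmul3l e3 he3mem z, smul_zero, add_zero,
        hF4 z, smul_smul]
    have hrhs1 : M.mul x (M.mul y z) = (βm y z * L x) • e3 := by
      nth_rewrite 1 [hdecomp y z]
      rw [map_add, map_smul, map_smul, hmul3r e3 he3mem x, smul_zero, add_zero,
        hF3 x, smul_smul]
    have hrhs2 : M.mul x (M.mul z y) = (βm z y * L x) • e3 := by
      nth_rewrite 1 [hdecomp z y]
      rw [map_add, map_smul, map_smul, hmul3r e3 he3mem x, smul_zero, add_zero,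
        hF3 x, smul_smul]
    rw [hlhs, hrhs1, hrhs2, ← add_smul] at hz
    have h' := ecan _ _ hz
    linear_combination h'

  have hLx : ∃ x ∈ Ag 1, L x ≠ 0 := by
    by_contra hcon
    push_neg at hcon
    have hL0 : ∀ x, L x = 0 := by
      have hker : ∀ x, x ∈ LinearMap.ker L := by
        refine allmem _ ?_ ?_ ?_ <;> intro z hz <;> simp only [LinearMap.mem_ker]
        · exact hcon z hz
        · obtain ⟨h1, -⟩ := sp2 z hz
          rw [h1, map_smul, hLe2, smul_eq_mul, mul_zero]
        · obtain ⟨h1, -⟩ := sp3 z hz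
          rw [h1, map_smul, hLe3, smul_eq_mul, mul_zero]
      intro x
      simpa using hker x
    apply hAg3ne
    rw [← hlcs3]
    refine le_bot_iff.mp ?_
    rw [aux_lcs_three]
    refine Submodule.span_le.mpr ?_
    rintro z ⟨a, b, hb, rfl⟩
    rw [hlcs2] at hb
    have hb' := sp23 b hb
    rw [show M.mul a b = 0 from ?_]
    · simp
    · nth_rewrite 1 [hb']
      rw [map_add, map_smul, map_smul, hmul3r e3 he3mem a, smul_zero, add_zero,
        hF3 a, hL0 a, zero_smul, smul_zero]
  have hβx : ∃ x ∈ Ag 1, ∃ y ∈ Ag 1, βm x y ≠ 0 := by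
    by_contra hcon
    push_neg at hcon
    have hβ1 : ∀ x ∈ Ag 1, ∀ y, βm x y = 0 := by
      intro x hx
      have hker : ∀ y, y ∈ LinearMap.ker (βm x) := by
        refine allmem _ ?_ ?_ ?_ <;> intro z hz <;> simp only [LinearMap.mem_ker]
        · exact hcon x hx z hz
        · obtain ⟨h1, -⟩ := sp2 z hz
          rw [h1, map_smul, hβe2r, smul_eq_mul, mul_zero]
        · obtain ⟨h1, -⟩ := sp3 z hz
          rw [h1, map_smul, hβe3r, smul_eq_mul, mul_zero]
      intro y
      simpa using hker y
    have hβ0 : ∀ x y, βm x y = 0 := by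
      intro x y
      have hker : ∀ x, x ∈ LinearMap.ker (βm.flip y) := by
        refine allmem _ ?_ ?_ ?_ <;> intro z hz <;>
          simp only [LinearMap.mem_ker, LinearMap.flip_apply]
        · exact hβ1 z hz y
        · obtain ⟨h1, -⟩ := sp2 z hz
          rw [h1, map_smul, LinearMap.smul_apply, hβe2l, smul_eq_mul, mul_zero]
        · obtain ⟨h1, -⟩ := sp3 z hz
          rw [h1, map_smul, LinearMap.smul_apply, hβe3l, smul_eq_mul, mul_zero]
      simpa using hker x
    have he2mem' : e2 ∈ M.lcs 2 := by rw [hlcs2]; exact Submodule.mem_sup_left he2mem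
    have hle : M.lcs 2 ≤ Submodule.span ℂ {e3} := by
      rw [aux_lcs_two]
      refine Submodule.span_le.mpr ?_
      rintro z ⟨a, b, rfl⟩
      rw [show M.mul a b = π3 (M.mul a b) • e3 from ?_]
      · exact Submodule.smul_mem _ _ (Submodule.mem_span_singleton_self e3)
      · have := hdecomp a b
        rwa [hβ0, zero_smul, zero_add] at this
    have he23 : e2 ∈ Ag 3 := by
      rw [he3span]
      exact hle he2mem'
    exact he2ne ((Submodule.disjoint_def.mp hdisj23) e2 he2mem he23)
  have mkb : ∀ u1 u4 u5 : A, u1 ∈ Ag 1 → u4 ∈ Ag 1 → u5 ∈ Ag 1 →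
      (∀ g0 g3 g4 : ℂ, g0 • u1 + g3 • u4 + g4 • u5 = 0 → g0 = 0 ∧ g3 = 0 ∧ g4 = 0) →
      ∀ c2 c3 : ℂ, c2 ≠ 0 → c3 ≠ 0 →
      ∃ b : Module.Basis (Fin 5) ℂ A, ⇑b = ![u1, c2 • e2, c3 • e3, u4, u5] := by
    intro u1 u4 u5 hu1 hu4 hu5 hind c2 c3 hc2 hc3
    have hli5 : LinearIndependent ℂ ![u1, c2 • e2, c3 • e3, u4, u5] := by
      rw [Fintype.linearIndependent_iff]
      intro g hg5
      rw [Fin.sum_univ_five] at hg5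
      simp only [Matrix.cons_val_zero, Matrix.cons_val_one, Matrix.cons_val_two,
        Matrix.cons_val_three, Matrix.cons_val_four, Matrix.vecHead, Matrix.vecTail,
        Matrix.cons_val_succ, Function.comp] at hg5
      have hre : (g 0 • u1 + g 3 • u4 + g 4 • u5) + (g 1 * c2) • e2 + (g 2 * c3) • e3 = 0 := by
        rw [← hg5, mul_smul, mul_smul]
        abel
      obtain ⟨p1, p2, p3⟩ := comp0 _
        (add_mem (add_mem (Submodule.smul_mem _ _ hu1) (Submodule.smul_mem _ _ hu4))
          (Submodule.smul_mem _ _ hu5))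
        _ (Submodule.smul_mem _ _ he2mem) _ (Submodule.smul_mem _ _ he3mem) hre
      obtain ⟨q0, q3, q4⟩ := hind _ _ _ p1
      have q1 : g 1 = 0 := by
        rcases smul_eq_zero.mp p2 with h' | h'
        · exact (mul_eq_zero.mp h').resolve_right hc2
        · exact absurd h' he2ne
      have q2 : g 2 = 0 := by
        rcases smul_eq_zero.mp p3 with h' | h'
        · exact (mul_eq_zero.mp h').resolve_right hc3
        · exact absurd h' he3ne
      intro i
      fin_cases i <;> assumption
    exact ⟨basisOfLinearIndependentOfCardEqFinrank hli5 (by simp [h5]),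
      coe_basisOfLinearIndependentOfCardEqFinrank _ _⟩

  obtain ⟨x0, hx0m, hLx0⟩ := hLx
  by_cases hR : ∃ z ∈ Ag 1, R z ≠ 0
  · -- CASE k = 0 : the algebra KF₅¹
    obtain ⟨z0, hz0m, hRz0⟩ := hR
    have step1 : ∀ y, βm x0 y * R z0 = βm x0 z0 * R y := by
      intro y
      have h1 := KEY x0 y z0
      have h2 := KEY x0 z0 y
      linear_combination h1 - h2
    have step2 : ∀ y z, L x0 * (βm y z + βm z y) * R z0 = βm x0 z0 * R y * R z := by
      intro y z
      have h := KEY x0 y z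
      linear_combination R z * step1 y - R z0 * h
    set c : ℂ := βm x0 z0 / (L x0 * R z0) with hcdef
    have hβall : ∀ x y, βm x y = c * L x * R y := by
      intro x y
      have h1 := KEY x y z0
      have h2'' : (L x0 * (βm y z0 + βm z0 y)) * R z0 = (βm x0 z0 * R y) * R z0 := by
        linear_combination step2 y z0
      have h2' := mul_right_cancel₀ hRz0 h2''
      rw [hcdef]
      field_simp
      linear_combination L x0 * h1 + L x * h2'
    have hc : c ≠ 0 := by
      intro h0
      obtain ⟨x, hx, y, hy, hβ⟩ := hβx
      apply hβ
      rw [hβall x y, h0, zero_mul, zero_mul]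
    have hLR : ∀ y z, L y * R z + L z * R y = R y * R z := by
      intro y z
      have h := KEY x0 y z
      rw [hβall x0 y, hβall y z, hβall z y] at h
      have hcL : c * L x0 ≠ 0 := mul_ne_zero hc hLx0
      apply mul_left_cancel₀ hcL
      linear_combination -h
    have hRz0L : R z0 = 2 * L z0 := by
      have h := hLR z0 z0
      exact mul_right_cancel₀ hRz0 (by linear_combination -h)
    have hLz0 : L z0 ≠ 0 := by
      intro h0
      apply hRz0
      rw [hRz0L, h0, mul_zero]
    have hR2L : ∀ y, R y = 2 * L y := by
      intro y
      have h := hLR y z0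
      rw [hRz0L] at h
      exact mul_right_cancel₀ hLz0 (by linear_combination -h)
    have hββ : ∀ x y, βm x y = 2 * c * L x * L y := by
      intro x y
      rw [hβall, hR2L]
      ring
    set s2 : ℂ := 2 * c * L z0 * L z0 with hs2def
    have hs2 : s2 ≠ 0 := by
      rw [hs2def]
      exact mul_ne_zero (mul_ne_zero (mul_ne_zero two_ne_zero hc) hLz0) hLz0
    set c3 : ℂ := s2 * L z0 with hc3def
    have hc3 : c3 ≠ 0 := mul_ne_zero hs2 hLz0
    -- kernel of L on Ag 1
    have hrk : Module.finrank ℂ (LinearMap.ker (L.domRestrict (Ag 1))) = 2 := by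
      have hrn := LinearMap.finrank_range_add_finrank_ker (L.domRestrict (Ag 1))
      rw [htype] at hrn
      have hr1 : Module.finrank ℂ (LinearMap.range (L.domRestrict (Ag 1))) = 1 := by
        have hle1 : Module.finrank ℂ (LinearMap.range (L.domRestrict (Ag 1))) ≤ 1 := by
          simpa using Submodule.finrank_le (LinearMap.range (L.domRestrict (Ag 1)))
        have hne0 : Module.finrank ℂ (LinearMap.range (L.domRestrict (Ag 1))) ≠ 0 := by
          rw [ne_eq, Submodule.finrank_eq_zero]
          intro hbot
          apply hLz0
          have hmem : L z0 ∈ LinearMap.range (L.domRestrict (Ag 1)) := ⟨⟨z0, hz0m⟩, rfl⟩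
          rw [hbot] at hmem
          simpa using hmem
        omega
      omega
    obtain ⟨uk⟩ : Nonempty (Module.Basis (Fin 2) ℂ (LinearMap.ker (L.domRestrict (Ag 1)))) :=
      ⟨Module.finBasisOfFinrankEq ℂ _ hrk⟩
    set E4 : A := ((uk 0 : Ag 1) : A) with hE4def
    set E5 : A := ((uk 1 : Ag 1) : A) with hE5def
    have hE4m : E4 ∈ Ag 1 := (uk 0 : Ag 1).2
    have hE5m : E5 ∈ Ag 1 := (uk 1 : Ag 1).2
    have hLE4 : L E4 = 0 := by
      have h := (uk 0).2
      rwa [LinearMap.mem_ker, LinearMap.domRestrict_apply] at h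
    have hLE5 : L E5 = 0 := by
      have h := (uk 1).2
      rwa [LinearMap.mem_ker, LinearMap.domRestrict_apply] at h
    have hind : ∀ g0 g3 g4 : ℂ, g0 • z0 + g3 • E4 + g4 • E5 = 0 →
        g0 = 0 ∧ g3 = 0 ∧ g4 = 0 := by
      intro g0 g3 g4 h
      have hL' : g0 * L z0 = 0 := by
        have hh := congrArg L h
        rwa [map_add, map_add, map_smul, map_smul, map_smul, hLE4, hLE5, smul_eq_mul,
          smul_eq_mul, smul_eq_mul, mul_zero, mul_zero, add_zero, add_zero, map_zero] at hh
      have hg0 : g0 = 0 := (mul_eq_zero.mp hL').resolve_right hLz0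
      rw [hg0, zero_smul, zero_add] at h
      have hker : (g3 • uk 0 + g4 • uk 1 : LinearMap.ker (L.domRestrict (Ag 1))) = 0 := by
        have hcoe : (((g3 • uk 0 + g4 • uk 1 : LinearMap.ker (L.domRestrict (Ag 1))) : Ag 1) : A)
            = g3 • E4 + g4 • E5 := by push_cast; rfl
        have h0 : (((g3 • uk 0 + g4 • uk 1 : LinearMap.ker (L.domRestrict (Ag 1))) : Ag 1) : A) = 0 := by
          rw [hcoe, h]
        exact_mod_cast h0
      have hli2 := Fintype.linearIndependent_iff.mp uk.linearIndependent ![g3, g4] (by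
        rw [Fin.sum_univ_two]
        simpa using hker)
      exact ⟨hg0, hli2 0, hli2 1⟩
    obtain ⟨bb, hbb⟩ := mkb z0 E4 E5 hz0m hE4m hE5m hind s2 c3 hs2 hc3
    -- products
    have pm : ∀ x ∈ Ag 1, ∀ y ∈ Ag 1, M.mul x y = (2 * c * L x * L y) • e2 := by
      intro x hx y hy
      rw [hF6 x hx y hy, hββ]
    have hz3r : ∀ x, M.mul x (c3 • e3) = 0 := fun x => by
      rw [map_smul, hmul3r e3 he3mem x, smul_zero]
    have hz3l : ∀ x, M.mul (c3 • e3) x = 0 := fun x => by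
      rw [map_smul, LinearMap.smul_apply, hmul3l e3 he3mem x, smul_zero]
    have hz2l : ∀ x, M.mul (s2 • e2) x = (s2 * R x) • e3 := fun x => by
      rw [map_smul, LinearMap.smul_apply, hF4 x, smul_smul]
    have hz2r : ∀ x, M.mul x (s2 • e2) = (s2 * L x) • e3 := fun x => by
      rw [map_smul, hF3 x, smul_smul]
    have hm00 : M.mul z0 z0 = s2 • e2 := by
      rw [pm z0 hz0m z0 hz0m, hs2def]
    have hm01 : M.mul z0 (s2 • e2) = c3 • e3 := by
      rw [hz2r z0, hc3def]
    have hm10 : M.mul (s2 • e2) z0 = (2 : ℂ) • (c3 • e3) := by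
      rw [hz2l z0, hR2L z0, smul_smul, hc3def]
      congr 1
      ring
    have hm11 : M.mul (s2 • e2) (s2 • e2) = 0 := by
      rw [hz2l, map_smul, hRe2]; simp
    have hm13 : M.mul (s2 • e2) E4 = 0 := by
      rw [hz2l, hR2L, hLE4]; simp
    have hm14 : M.mul (s2 • e2) E5 = 0 := by
      rw [hz2l, hR2L, hLE5]; simp
    have hm31 : M.mul E4 (s2 • e2) = 0 := by
      rw [hz2r, hLE4]; simp
    have hm41 : M.mul E5 (s2 • e2) = 0 := by
      rw [hz2r, hLE5]; simp
    have hm03 : M.mul z0 E4 = 0 := by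
      rw [pm z0 hz0m E4 hE4m, hLE4]; simp
    have hm04 : M.mul z0 E5 = 0 := by
      rw [pm z0 hz0m E5 hE5m, hLE5]; simp
    have hm30 : M.mul E4 z0 = 0 := by
      rw [pm E4 hE4m z0 hz0m, hLE4]; simp
    have hm40 : M.mul E5 z0 = 0 := by
      rw [pm E5 hE5m z0 hz0m, hLE5]; simp
    have hm33 : M.mul E4 E4 = 0 := by
      rw [pm E4 hE4m E4 hE4m, hLE4]; simp
    have hm34 : M.mul E4 E5 = 0 := by
      rw [pm E4 hE4m E5 hE5m, hLE4]; simp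
    have hm43 : M.mul E5 E4 = 0 := by
      rw [pm E5 hE5m E4 hE4m, hLE5]; simp
    have hm44 : M.mul E5 E5 = 0 := by
      rw [pm E5 hE5m E5 hE5m, hLE5]; simp
    have htab : ∀ i j, M.mul (bb i) (bb j) = tbl (⇑bb) 0 i j := by
      intro i j
      fin_cases i <;> fin_cases j <;>
        simp only [hbb, tbl, Matrix.cons_val_zero, Matrix.cons_val_one, Matrix.cons_val_two,
          Matrix.cons_val_three, Matrix.cons_val_four, Matrix.vecHead, Matrix.vecTail,
          Matrix.cons_val_succ, Function.comp]
      · exact hm00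
      · exact hm01
      · exact hz3r z0
      · exact hm03
      · exact hm04
      · exact hm10
      · exact hm11
      · exact hz3r _
      · exact hm13
      · exact hm14
      · exact hz3l _
      · exact hz3l _
      · exact hz3l _
      · exact hz3l _
      · exact hz3l _
      · exact hm30
      · exact hm31
      · exact hz3r _
      · exact hm33
      · exact hm34
      · exact hm40
      · exact hm41
      · exact hz3r _
      · exact hm43
      · exact hm44
    refine ⟨0, ⟨bb, ?_⟩, ?_⟩
    · exact htab
    · rintro k' ⟨f, hf⟩
      exact aux_unique M f bb k' 0 hf htab
  · -- CASE R = 0 : the algebras KF₅² and KF₅³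
    push_neg at hR
    have hR0 : ∀ x, R x = 0 := by
      have hker : ∀ x, x ∈ LinearMap.ker R := by
        refine allmem _ ?_ ?_ ?_ <;> intro z hz <;> simp only [LinearMap.mem_ker]
        · exact hR z hz
        · obtain ⟨h1, -⟩ := sp2 z hz
          rw [h1, map_smul, hRe2, smul_eq_mul, mul_zero]
        · obtain ⟨h1, -⟩ := sp3 z hz
          rw [h1, map_smul, hRe3, smul_eq_mul, mul_zero]
      intro x
      simpa using hker x
    have hanti : ∀ y z, βm z y = - βm y z := by
      intro y z
      have h := KEY x0 y z
      rw [hR0, mul_zero] at h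
      have h2 : βm y z + βm z y = 0 := by
        rcases mul_eq_zero.mp h.symm with h' | h'
        · exact absurd h' hLx0
        · exact h'
      linear_combination h2
    have hdiag : ∀ y, βm y y = 0 := by
      intro y
      have h := hanti y y
      linear_combination (1/2 : ℂ) * h
    obtain ⟨u, hum, w, hwm, hs⟩ := hβx
    obtain ⟨E1, hE1m, y, hym, hLE1, hβ1y⟩ :
        ∃ E1 ∈ Ag 1, ∃ y ∈ Ag 1, L E1 ≠ 0 ∧ βm E1 y ≠ 0 := by
      by_cases hLu : L u ≠ 0
      · exact ⟨u, hum, w, hwm, hLu, hs⟩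
      by_cases hLw : L w ≠ 0
      · refine ⟨w, hwm, u, hum, hLw, ?_⟩
        rw [hanti u w]
        exact neg_ne_zero.mpr hs
      push_neg at hLu hLw
      by_cases hx0w : βm x0 w = - βm u w
      · refine ⟨x0, hx0m, w, hwm, hLx0, ?_⟩
        rw [hx0w]
        exact neg_ne_zero.mpr hs
      · refine ⟨x0 + u, add_mem hx0m hum, w, hwm, ?_, ?_⟩
        · rw [map_add, hLu, add_zero]
          exact hLx0
        · rw [map_add, LinearMap.add_apply]
          intro h0
          apply hx0w
          linear_combination h0
    set E4 : A := y - (L y / L E1) • E1 with hE4def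
    have hE4m : E4 ∈ Ag 1 := sub_mem hym (Submodule.smul_mem _ _ hE1m)
    have hLE4 : L E4 = 0 := by
      rw [hE4def, map_sub, map_smul, smul_eq_mul]
      field_simp
      ring
    have hsE : βm E1 E4 = βm E1 y := by
      rw [hE4def, map_sub, map_smul, smul_eq_mul, hdiag, mul_zero, sub_zero]
    have hs' : βm E1 E4 ≠ 0 := by
      rw [hsE]
      exact hβ1y
    -- the radical vector
    set ρ : A := βm (v 1) (v 2) • v 0 - βm (v 0) (v 2) • v 1 + βm (v 0) (v 1) • v 2 with hρdef
    have hρm : ρ ∈ Ag 1 :=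
      add_mem (sub_mem (Submodule.smul_mem _ _ (hvm 0)) (Submodule.smul_mem _ _ (hvm 1)))
        (Submodule.smul_mem _ _ (hvm 2))
    have hρexp : ∀ x, βm ρ x = βm (v 1) (v 2) * βm (v 0) x - βm (v 0) (v 2) * βm (v 1) x
        + βm (v 0) (v 1) * βm (v 2) x := by
      intro x
      rw [hρdef, map_add, map_sub, map_smul, map_smul, map_smul]
      simp only [LinearMap.add_apply, LinearMap.sub_apply, LinearMap.smul_apply, smul_eq_mul]
    have hρv0 : βm ρ (v 0) = 0 := by
      rw [hρexp, hdiag, hanti (v 0) (v 1), hanti (v 0) (v 2)]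
      ring
    have hρv1 : βm ρ (v 1) = 0 := by
      rw [hρexp, hdiag, hanti (v 1) (v 2)]
      ring
    have hρv2 : βm ρ (v 2) = 0 := by
      rw [hρexp, hdiag]
      ring
    have hρr : ∀ x, βm ρ x = 0 := by
      have hker : ∀ x, x ∈ LinearMap.ker (βm ρ) := by
        refine allmem _ ?_ ?_ ?_
        · refine mem1 _ ?_ ?_ ?_ <;> simp only [LinearMap.mem_ker]
          · exact hρv0
          · exact hρv1
          · exact hρv2
        · intro z hz
          obtain ⟨h1, -⟩ := sp2 z hz
          simp only [LinearMap.mem_ker]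
          rw [h1, map_smul, hβe2r, smul_eq_mul, mul_zero]
        · intro z hz
          obtain ⟨h1, -⟩ := sp3 z hz
          simp only [LinearMap.mem_ker]
          rw [h1, map_smul, hβe3r, smul_eq_mul, mul_zero]
      intro x
      simpa using hker x
    have hρl : ∀ x, βm x ρ = 0 := fun x => by
      rw [hanti ρ x, hρr, neg_zero]
    have hρne : ρ ≠ 0 := by
      intro h0
      obtain ⟨q0, q1, q2⟩ := vext (βm (v 1) (v 2)) (-(βm (v 0) (v 2))) (βm (v 0) (v 1)) (by
        rw [neg_smul, ← sub_eq_add_neg, ← hρdef]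
        exact h0)
      have hb02 : βm (v 0) (v 2) = 0 := neg_eq_zero.mp q1
      have hb10 : βm (v 1) (v 0) = 0 := by rw [hanti (v 0) (v 1), q2, neg_zero]
      have hb20 : βm (v 2) (v 0) = 0 := by rw [hanti (v 0) (v 2), hb02, neg_zero]
      have hb21 : βm (v 2) (v 1) = 0 := by rw [hanti (v 1) (v 2), q0, neg_zero]
      have hst0 : Ag 1 ≤ LinearMap.ker (βm.flip (v 0)) := by
        refine mem1 _ ?_ ?_ ?_ <;> simp only [LinearMap.mem_ker, LinearMap.flip_apply]
        · exact hdiag _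
        · exact hb10
        · exact hb20
      have hst1 : Ag 1 ≤ LinearMap.ker (βm.flip (v 1)) := by
        refine mem1 _ ?_ ?_ ?_ <;> simp only [LinearMap.mem_ker, LinearMap.flip_apply]
        · exact q2
        · exact hdiag _
        · exact hb21
      have hst2 : Ag 1 ≤ LinearMap.ker (βm.flip (v 2)) := by
        refine mem1 _ ?_ ?_ ?_ <;> simp only [LinearMap.mem_ker, LinearMap.flip_apply]
        · exact hb02
        · exact q0
        · exact hdiag _
      have hstE : Ag 1 ≤ LinearMap.ker (βm E1) := by
        refine mem1 _ ?_ ?_ ?_ <;> simp only [LinearMap.mem_ker]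
        · simpa using hst0 hE1m
        · simpa using hst1 hE1m
        · simpa using hst2 hE1m
      apply hβ1y
      simpa using hstE hym
    -- common product facts
    have hz2l0 : ∀ (a : ℂ) (x : A), M.mul (a • e2) x = 0 := by
      intro a x
      rw [map_smul, LinearMap.smul_apply, hF4, hR0, zero_smul, smul_zero]
    have hz2r' : ∀ (a : ℂ) (x : A), M.mul x (a • e2) = (a * L x) • e3 := by
      intro a x
      rw [map_smul, hF3, smul_smul]
    have hz3r : ∀ (a : ℂ) (x : A), M.mul x (a • e3) = 0 := fun a x => by
      rw [map_smul, hmul3r e3 he3mem x, smul_zero]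
    have hz3l : ∀ (a : ℂ) (x : A), M.mul (a • e3) x = 0 := fun a x => by
      rw [map_smul, LinearMap.smul_apply, hmul3l e3 he3mem x, smul_zero]
    by_cases hLρ : L ρ = 0
    · -- CASE k = 1 : the algebra KF₅²
      have hind : ∀ g0 g3 g4 : ℂ, g0 • E1 + g3 • E4 + g4 • ρ = 0 →
          g0 = 0 ∧ g3 = 0 ∧ g4 = 0 := by
        intro g0 g3 g4 h
        have hg0 : g0 = 0 := by
          have hh1 : βm (g0 • E1 + g3 • E4 + g4 • ρ) E4 = 0 := by rw [h]; simp
          rw [map_add, map_add, map_smul, map_smul, map_smul] at hh1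
          simp only [LinearMap.add_apply, LinearMap.smul_apply, smul_eq_mul] at hh1
          rw [hdiag E4, hρr E4] at hh1
          simp only [mul_zero, add_zero] at hh1
          exact (mul_eq_zero.mp hh1).resolve_right hs'
        have hg3 : g3 = 0 := by
          have hh2 : βm E1 (g0 • E1 + g3 • E4 + g4 • ρ) = 0 := by rw [h]; simp
          rw [map_add, map_add, map_smul, map_smul, map_smul] at hh2
          simp only [smul_eq_mul] at hh2
          rw [hdiag E1, hρl E1] at hh2
          simp only [mul_zero, add_zero, zero_add] at hh2
          exact (mul_eq_zero.mp hh2).resolve_right hs'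
        rw [hg0, hg3, zero_smul, zero_smul, zero_add, zero_add] at h
        exact ⟨hg0, hg3, (smul_eq_zero.mp h).resolve_right hρne⟩
      obtain ⟨bb, hbb⟩ := mkb E1 E4 ρ hE1m hE4m hρm hind (βm E1 E4) (βm E1 E4 * L E1) hs'
        (mul_ne_zero hs' hLE1)
      have hm00 : M.mul E1 E1 = 0 := by rw [hF6 E1 hE1m E1 hE1m, hdiag, zero_smul]
      have hm01 : M.mul E1 (βm E1 E4 • e2) = (βm E1 E4 * L E1) • e3 := hz2r' _ _
      have hm03 : M.mul E1 E4 = βm E1 E4 • e2 := hF6 E1 hE1m E4 hE4m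
      have hm04 : M.mul E1 ρ = 0 := by rw [hF6 E1 hE1m ρ hρm, hρl, zero_smul]
      have hm30 : M.mul E4 E1 = -(βm E1 E4 • e2) := by
        rw [hF6 E4 hE4m E1 hE1m, hanti E1 E4, neg_smul]
      have hm31 : M.mul E4 (βm E1 E4 • e2) = 0 := by rw [hz2r', hLE4, mul_zero, zero_smul]
      have hm33 : M.mul E4 E4 = 0 := by rw [hF6 E4 hE4m E4 hE4m, hdiag, zero_smul]
      have hm34 : M.mul E4 ρ = 0 := by rw [hF6 E4 hE4m ρ hρm, hρl, zero_smul]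
      have hm40 : M.mul ρ E1 = 0 := by rw [hF6 ρ hρm E1 hE1m, hρr, zero_smul]
      have hm41 : M.mul ρ (βm E1 E4 • e2) = 0 := by rw [hz2r', hLρ, mul_zero, zero_smul]
      have hm43 : M.mul ρ E4 = 0 := by rw [hF6 ρ hρm E4 hE4m, hρr, zero_smul]
      have hm44 : M.mul ρ ρ = 0 := by rw [hF6 ρ hρm ρ hρm, hρr, zero_smul]
      have htab : ∀ i j, M.mul (bb i) (bb j) = tbl (⇑bb) 1 i j := by
        intro i j
        fin_cases i <;> fin_cases j <;>
          simp only [hbb, tbl, Matrix.cons_val_zero, Matrix.cons_val_one, Matrix.cons_val_two,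
            Matrix.cons_val_three, Matrix.cons_val_four, Matrix.vecHead, Matrix.vecTail,
            Matrix.cons_val_succ, Function.comp]
        · exact hm00
        · exact hm01
        · exact hz3r _ _
        · exact hm03
        · exact hm04
        · exact hz2l0 _ _
        · exact hz2l0 _ _
        · exact hz2l0 _ _
        · exact hz2l0 _ _
        · exact hz2l0 _ _
        · exact hz3l _ _
        · exact hz3l _ _
        · exact hz3l _ _
        · exact hz3l _ _
        · exact hz3l _ _
        · exact hm30
        · exact hm31
        · exact hz3r _ _
        · exact hm33
        · exact hm34
        · exact hm40
        · exact hm41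
        · exact hz3r _ _
        · exact hm43
        · exact hm44
      refine ⟨1, ⟨bb, ?_⟩, ?_⟩
      · exact htab
      · rintro k' ⟨f, hf⟩
        exact aux_unique M f bb k' 1 hf htab
    · -- CASE k = 2 : the algebra KF₅³
      set E5 : A := (L E1 / L ρ) • ρ with hE5def
      have hE5m : E5 ∈ Ag 1 := Submodule.smul_mem _ _ hρm
      have hβE5r : ∀ x, βm E5 x = 0 := by
        intro x
        rw [hE5def, map_smul, LinearMap.smul_apply, smul_eq_mul, hρr, mul_zero]
      have hβE5l : ∀ x, βm x E5 = 0 := by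
        intro x
        rw [hE5def, map_smul, smul_eq_mul, hρl, mul_zero]
      have hLE5 : L E5 = L E1 := by
        rw [hE5def, map_smul, smul_eq_mul]
        field_simp
      have hE5ne : E5 ≠ 0 := smul_ne_zero (div_ne_zero hLE1 hLρ) hρne
      have hind : ∀ g0 g3 g4 : ℂ, g0 • E1 + g3 • E4 + g4 • E5 = 0 →
          g0 = 0 ∧ g3 = 0 ∧ g4 = 0 := by
        intro g0 g3 g4 h
        have hg0 : g0 = 0 := by
          have hh1 : βm (g0 • E1 + g3 • E4 + g4 • E5) E4 = 0 := by rw [h]; simp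
          rw [map_add, map_add, map_smul, map_smul, map_smul] at hh1
          simp only [LinearMap.add_apply, LinearMap.smul_apply, smul_eq_mul] at hh1
          rw [hdiag E4, hβE5r E4] at hh1
          simp only [mul_zero, add_zero] at hh1
          exact (mul_eq_zero.mp hh1).resolve_right hs'
        have hg3 : g3 = 0 := by
          have hh2 : βm E1 (g0 • E1 + g3 • E4 + g4 • E5) = 0 := by rw [h]; simp
          rw [map_add, map_add, map_smul, map_smul, map_smul] at hh2
          simp only [smul_eq_mul] at hh2
          rw [hdiag E1, hβE5l E1] at hh2
          simp only [mul_zero, add_zero, zero_add] at hh2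
          exact (mul_eq_zero.mp hh2).resolve_right hs'
        rw [hg0, hg3, zero_smul, zero_smul, zero_add, zero_add] at h
        exact ⟨hg0, hg3, (smul_eq_zero.mp h).resolve_right hE5ne⟩
      obtain ⟨bb, hbb⟩ := mkb E1 E4 E5 hE1m hE4m hE5m hind (βm E1 E4) (βm E1 E4 * L E1) hs'
        (mul_ne_zero hs' hLE1)
      have hm00 : M.mul E1 E1 = 0 := by rw [hF6 E1 hE1m E1 hE1m, hdiag, zero_smul]
      have hm01 : M.mul E1 (βm E1 E4 • e2) = (βm E1 E4 * L E1) • e3 := hz2r' _ _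
      have hm03 : M.mul E1 E4 = βm E1 E4 • e2 := hF6 E1 hE1m E4 hE4m
      have hm04 : M.mul E1 E5 = 0 := by rw [hF6 E1 hE1m E5 hE5m, hβE5l, zero_smul]
      have hm30 : M.mul E4 E1 = -(βm E1 E4 • e2) := by
        rw [hF6 E4 hE4m E1 hE1m, hanti E1 E4, neg_smul]
      have hm31 : M.mul E4 (βm E1 E4 • e2) = 0 := by rw [hz2r', hLE4, mul_zero, zero_smul]
      have hm33 : M.mul E4 E4 = 0 := by rw [hF6 E4 hE4m E4 hE4m, hdiag, zero_smul]
      have hm34 : M.mul E4 E5 = 0 := by rw [hF6 E4 hE4m E5 hE5m, hβE5l, zero_smul]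
      have hm40 : M.mul E5 E1 = 0 := by rw [hF6 E5 hE5m E1 hE1m, hβE5r, zero_smul]
      have hm41 : M.mul E5 (βm E1 E4 • e2) = (βm E1 E4 * L E1) • e3 := by
        rw [hz2r', hLE5]
      have hm43 : M.mul E5 E4 = 0 := by rw [hF6 E5 hE5m E4 hE4m, hβE5r, zero_smul]
      have hm44 : M.mul E5 E5 = 0 := by rw [hF6 E5 hE5m E5 hE5m, hβE5r, zero_smul]
      have htab : ∀ i j, M.mul (bb i) (bb j) = tbl (⇑bb) 2 i j := by
        intro i j
        fin_cases i <;> fin_cases j <;>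
          simp only [hbb, tbl, Matrix.cons_val_zero, Matrix.cons_val_one, Matrix.cons_val_two,
            Matrix.cons_val_three, Matrix.cons_val_four, Matrix.vecHead, Matrix.vecTail,
            Matrix.cons_val_succ, Function.comp]
        · exact hm00
        · exact hm01
        · exact hz3r _ _
        · exact hm03
        · exact hm04
        · exact hz2l0 _ _
        · exact hz2l0 _ _
        · exact hz2l0 _ _
        · exact hz2l0 _ _
        · exact hz2l0 _ _
        · exact hz3l _ _
        · exact hz3l _ _
        · exact hz3l _ _
        · exact hz3l _ _
        · exact hz3l _ _
        · exact hm30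
        · exact hm31
        · exact hz3r _ _
        · exact hm33
        · exact hm34
        · exact hm40
        · exact hm41
        · exact hz3r _ _
        · exact hm43
        · exact hm44
      refine ⟨2, ⟨bb, ?_⟩, ?_⟩
      · exact htab
      · rintro k' ⟨f, hf⟩
        exact aux_unique M f bb k' 2 hf htab

end ZinbielStr
end

section
/- Let A be a naturally graded quasi-filiform complex Zinbiel algebra of type A_(r) with r > 2, with grading A = A_1 ⊕ ⋯ ⊕ A_{n−2}. Then x∘x = 0 for every x ∈ A_1. -/
namespace ZinbielStr

variable {A : Type*} [AddCommGroup A] [Module ℂ A]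

lemma lcs_succ_eq (M : ZinbielStr A) (k : ℕ) (hk : 1 ≤ k) :
    M.lcs (k + 1) = Submodule.span ℂ {z | ∃ a b, b ∈ M.lcs k ∧ z = M.mul a b} := by
  obtain ⟨k, rfl⟩ := Nat.exists_eq_add_of_le hk
  rw [show 1 + k + 1 = k + 2 by omega, show 1 + k = k + 1 by omega]
  rfl

/-- In a naturally graded quasi-filiform complex Zinbiel algebra of type `A_(r)`
with `r > 2`, every `x ∈ A_1` satisfies `x ∘ x = 0`. -/
theorem type_gt_two_square_zero {A : Type*} [AddCommGroup A] [Module ℂ A]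
    [FiniteDimensional ℂ A] (M : ZinbielStr A) (n r : ℕ)
    (Ag : ℕ → Submodule ℂ A)
    (hqf : M.IsQuasiFiliform n) (hg : M.IsNaturalGrading (n - 2) Ag)
    (hr : 2 < r)
    (h1 : Module.finrank ℂ (Ag 1) = 2) (h2 : Module.finrank ℂ (Ag r) = 2) :
    ∀ x ∈ Ag 1, M.mul x x = 0 := by
  classical
  obtain ⟨hfr, hlcs_ne, hlcs_bot⟩ := hqf
  set t := n - 2 with ht
  -- `r` is at most `t`
  have hrt : r ≤ t := by
    by_contra h
    rw [hg.high_deg r (by omega)] at h2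
    simp at h2
  have hn5 : 5 ≤ n := by omega
  have hn1 : n - 1 = t + 1 := by omega
  rw [hn1] at hlcs_bot
  -- the tail sums of the grading
  set G : ℕ → Submodule ℂ A := fun k => ⨆ j, ⨆ (_ : k ≤ j), Ag j with hG
  have hGle : ∀ {k j : ℕ}, k ≤ j → Ag j ≤ G k := by
    intro k j h
    rw [hG]
    exact le_iSup_of_le j (le_iSup_of_le h le_rfl)
  have hGmono : ∀ {k l : ℕ}, k ≤ l → G l ≤ G k := by
    intro k l h
    rw [hG]
    exact iSup₂_le fun j hj => hGle (le_trans h hj)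
  have hlcsG : ∀ k, 1 ≤ k → k ≤ t → M.lcs k = G k := fun k a b => hg.lcs_eq k a b
  have hGbot : ∀ k, t < k → G k = ⊥ := by
    intro k hk
    apply le_bot_iff.mp
    rw [hG]
    exact iSup₂_le fun j hj => le_of_eq (hg.high_deg j (by omega))
  have htop : (⊤ : Submodule ℂ A) = G 1 := by
    rw [← hlcsG 1 le_rfl (by omega)]; rfl
  -- products of tails
  have hmulGG : ∀ i j : ℕ, Submodule.map₂ M.mul (G i) (G j) ≤ G (i + j) := by
    intro i j
    rw [hG, Submodule.map₂_iSup_left]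
    apply iSup_le; intro p
    rw [Submodule.map₂_iSup_left]
    apply iSup_le; intro hp
    rw [Submodule.map₂_iSup_right]
    apply iSup_le; intro q
    rw [Submodule.map₂_iSup_right]
    apply iSup_le; intro hq
    refine le_trans ?_ (hGle (show i + j ≤ p + q by omega))
    exact Submodule.map₂_le.mpr fun a ha b hb => hg.mul_mem p q a b ha hb
  have hGsup : ∀ k : ℕ, G k = Ag k ⊔ G (k + 1) := by
    intro k
    apply le_antisymm
    · rw [hG]
      apply iSup₂_le; intro j hj
      rcases eq_or_lt_of_le hj with rfl | h
      · exact le_sup_left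
      · exact le_sup_of_le_right (hGle h)
    · exact sup_le (hGle le_rfl) (hGmono (by omega))
  have hdisj : ∀ k : ℕ, Disjoint (Ag k) (G (k + 1)) := by
    intro k
    refine (hg.indep k).mono_right ?_
    rw [hG]
    exact iSup₂_le fun j hj => le_iSup_of_le j (le_iSup_of_le (by omega) le_rfl)
  -- dimension bookkeeping
  set F : ℕ → ℕ := fun k => Module.finrank ℂ (Ag k) with hF
  have hrank : ∀ d k, 1 ≤ k → k + d = t →
      Module.finrank ℂ (G k) = ∑ j ∈ Finset.Icc k t, F j := by
    intro d
    induction d with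
    | zero =>
      intro k hk hkt
      have hkt' : k = t := by omega
      rw [hkt', hGsup t, hGbot (t + 1) (by omega), sup_bot_eq, Finset.Icc_self,
        Finset.sum_singleton, hF]
    | succ d ih =>
      intro k hk hkt
      have e1 := Submodule.finrank_sup_add_finrank_inf_eq (Ag k) (G (k + 1))
      rw [(hdisj k).eq_bot, finrank_bot] at e1
      have e2 : Finset.Icc k t = insert k (Finset.Icc (k + 1) t) := by
        ext j
        simp only [Finset.mem_Icc, Finset.mem_insert]
        omega
      rw [hGsup k, e2, Finset.sum_insert (by simp), ← ih (k + 1) (by omega) (by omega)]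
      have eFk : F k = Module.finrank ℂ (Ag k) := rfl
      omega
  have hsum : ∑ j ∈ Finset.Icc 1 t, F j = n := by
    rw [← hrank (t - 1) 1 le_rfl (by omega), ← htop, finrank_top]
    exact hfr
  -- no graded piece in range vanishes
  have hAgt_ne : Ag t ≠ ⊥ := by
    intro h
    apply hlcs_ne
    rw [hlcsG t (by omega) le_rfl, hGsup t, h, hGbot (t + 1) (by omega), sup_bot_eq]
  have hstat : ∀ k, 1 ≤ k → k ≤ t → Ag k ≠ ⊥ := by
    intro k hk1 hkt hbot
    rcases eq_or_lt_of_le hkt with rfl | hlt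
    · exact hAgt_ne hbot
    have he : M.lcs k = M.lcs (k + 1) := by
      rw [hlcsG k hk1 hkt, hlcsG (k + 1) (by omega) (by omega), hGsup k, hbot, bot_sup_eq]
    have hstep : ∀ j, M.lcs (k + j) = M.lcs k := by
      intro j
      induction j with
      | zero => rfl
      | succ j ih =>
        rw [show k + (j + 1) = (k + j) + 1 by omega, lcs_succ_eq M (k + j) (by omega), ih,
          ← lcs_succ_eq M k hk1, ← he]
    have hfin : M.lcs (t + 1) = M.lcs k := by
      rw [show t + 1 = k + (t + 1 - k) by omega]
      exact hstep _
    have : Ag t ≤ (⊥ : Submodule ℂ A) := by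
      calc Ag t ≤ G k := hGle hkt
      _ = M.lcs k := (hlcsG k hk1 hkt).symm
      _ = M.lcs (t + 1) := hfin.symm
      _ = ⊥ := hlcs_bot
    exact hAgt_ne (le_bot_iff.mp this)
  have hpos : ∀ k, 1 ≤ k → k ≤ t → 1 ≤ F k := by
    intro k hk1 hkt
    by_contra h
    have h0 : Module.finrank ℂ (Ag k) = 0 := by
      have : F k = 0 := by omega
      rwa [hF] at this
    exact hstat k hk1 hkt (Submodule.finrank_eq_zero.mp h0)
  have hF1 : F 1 = 2 := h1
  have hFr : F r = 2 := h2
  -- all other graded pieces are lines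
  have hdim1 : ∀ k, 2 ≤ k → k ≤ t → k ≠ r → Module.finrank ℂ (Ag k) = 1 := by
    intro k hk2 hkt hkr
    set S := Finset.Icc 1 t with hS
    set T := (S.erase 1).erase r with hT
    have h1S : (1 : ℕ) ∈ S := by simp [hS, Finset.mem_Icc]; omega
    have hrS : r ∈ S.erase 1 := by
      simp [hS, Finset.mem_Icc, Finset.mem_erase]
      omega
    have e1 : ∑ j ∈ S.erase 1, F j + F 1 = ∑ j ∈ S, F j := Finset.sum_erase_add S F h1S
    have e2 : ∑ j ∈ T, F j + F r = ∑ j ∈ S.erase 1, F j := Finset.sum_erase_add _ F hrS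
    have hcard : T.card = t - 2 := by
      rw [hT, Finset.card_erase_of_mem hrS, Finset.card_erase_of_mem h1S, hS, Nat.card_Icc]
      omega
    have hTmem : ∀ j, j ∈ T ↔ (1 ≤ j ∧ j ≤ t ∧ j ≠ 1 ∧ j ≠ r) := by
      intro j
      rw [hT, hS]
      simp [Finset.mem_erase, Finset.mem_Icc]
      omega
    have hT1 : ∀ j ∈ T, 1 ≤ F j := by
      intro j hj
      rw [hTmem j] at hj
      exact hpos j hj.1 hj.2.1
    have hsplit : ∑ j ∈ T, F j = ∑ j ∈ T, (F j - 1) + T.card := by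
      rw [Finset.card_eq_sum_ones, ← Finset.sum_add_distrib]
      apply Finset.sum_congr rfl
      intro j hj
      have := hT1 j hj
      omega
    have hzero : ∑ j ∈ T, (F j - 1) = 0 := by omega
    have hone := Finset.sum_eq_zero_iff.mp hzero k ((hTmem k).mpr ⟨by omega, hkt, by omega, hkr⟩)
    have := hpos k (by omega) hkt
    have : F k = 1 := by omega
    rwa [hF] at this
  -- the key structural fact : A_{k+1} = A_1 ∘ A_k
  have hAgsucc : ∀ k, 1 ≤ k → k + 1 ≤ t →
      Ag (k + 1) = Submodule.map₂ M.mul (Ag 1) (Ag k) := by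
    intro k hk1 hkt
    have hP : Submodule.map₂ M.mul (Ag 1) (Ag k) ≤ Ag (k + 1) := by
      apply Submodule.map₂_le.mpr
      intro a ha b hb
      have := hg.mul_mem 1 k a b ha hb
      rwa [show 1 + k = k + 1 by omega] at this
    have hup : Ag (k + 1) ≤ Submodule.map₂ M.mul (Ag 1) (Ag k) ⊔ G (k + 2) := by
      have hA : Ag (k + 1) ≤ M.lcs (k + 1) := by
        rw [hlcsG (k + 1) (by omega) hkt]
        exact hGle le_rfl
      have hB : M.lcs (k + 1) ≤ Submodule.map₂ M.mul (G 1) (G k) := by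
        rw [lcs_succ_eq M k hk1]
        apply Submodule.span_le.mpr
        rintro z ⟨a, b, hb, rfl⟩
        refine Submodule.apply_mem_map₂ _ ?_ ?_
        · rw [← htop]; trivial
        · rw [hlcsG k hk1 (by omega)] at hb; exact hb
      have hC : Submodule.map₂ M.mul (G 1) (G k) ≤
          Submodule.map₂ M.mul (Ag 1) (Ag k) ⊔ G (k + 2) := by
        rw [hGsup 1, hGsup k, Submodule.map₂_sup_left, Submodule.map₂_sup_right,
          Submodule.map₂_sup_right]
        apply sup_le
        apply sup_le
        · exact le_sup_left
        · refine le_sup_of_le_right ?_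
          exact le_trans (le_trans (Submodule.map₂_le_map₂_left (hGle le_rfl))
            (hmulGG 1 (k + 1))) (hGmono (by omega))
        · refine le_sup_of_le_right ?_
          apply sup_le
          · refine le_trans (le_trans (Submodule.map₂_le_map₂_right (hGle le_rfl))
              (hmulGG 2 k)) (hGmono (by omega))
          · exact le_trans (hmulGG 2 (k + 1)) (hGmono (by omega))
      exact le_trans hA (le_trans hB hC)
    calc Ag (k + 1) = (Submodule.map₂ M.mul (Ag 1) (Ag k) ⊔ G (k + 2)) ⊓ Ag (k + 1) :=
          (inf_eq_right.mpr hup).symm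
    _ = Submodule.map₂ M.mul (Ag 1) (Ag k) ⊔ (G (k + 2) ⊓ Ag (k + 1)) :=
          sup_inf_assoc_of_le _ hP
    _ = Submodule.map₂ M.mul (Ag 1) (Ag k) := by
          rw [(hdisj (k + 1)).symm.eq_bot, sup_bot_eq]
  -- a nonzero vector of a line spans it
  have hspan : ∀ k (w : A), 2 ≤ k → k ≤ t → k ≠ r → w ∈ Ag k → w ≠ 0 →
      Ag k = Submodule.span ℂ {w} := by
    intro k w hk2 hkt hkr hw hw0
    refine (Submodule.eq_of_le_of_finrank_le ?_ ?_).symm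
    · exact Submodule.span_le.mpr (by simpa using hw)
    · rw [hdim1 k hk2 hkt hkr, finrank_span_singleton hw0]
  -- main argument
  intro x hx1
  by_contra hxx
  have hx0 : x ≠ 0 := by
    rintro rfl
    simp at hxx
  -- a complement of x inside A_1
  obtain ⟨y, hy1, hyx⟩ : ∃ y ∈ Ag 1, y ∉ Submodule.span ℂ {x} := by
    by_contra h
    push_neg at h
    have hle : Ag 1 ≤ Submodule.span ℂ {x} := h
    have := Submodule.finrank_mono hle
    rw [h1, finrank_span_singleton hx0] at this
    omega
  have hy0 : y ≠ 0 := fun h => hyx (h ▸ Submodule.zero_mem _)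
  have hxyspan : Ag 1 = Submodule.span ℂ {x, y} := by
    have hle : Submodule.span ℂ {x, y} ≤ Ag 1 := by
      apply Submodule.span_le.mpr
      rintro z (rfl | rfl)
      · exact hx1
      · exact hy1
    refine (Submodule.eq_of_le_of_finrank_le hle ?_).symm
    rw [h1]
    have hinf : (Submodule.span ℂ {x}) ⊓ (Submodule.span ℂ {y}) = ⊥ := by
      apply eq_bot_iff.mpr
      rintro z ⟨hz1, hz2⟩
      obtain ⟨a, rfl⟩ := Submodule.mem_span_singleton.mp hz1
      obtain ⟨b, hb⟩ := Submodule.mem_span_singleton.mp hz2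
      rcases eq_or_ne b 0 with rfl | hb0
      · rw [zero_smul] at hb
        rw [← hb]
        simp
      exfalso
      apply hyx
      rw [Submodule.mem_span_singleton]
      exact ⟨b⁻¹ * a, by rw [mul_smul, ← hb, inv_smul_smul₀ hb0]⟩
    have e := Submodule.finrank_sup_add_finrank_inf_eq (Submodule.span ℂ {x})
      (Submodule.span ℂ {y})
    rw [hinf, finrank_bot, finrank_span_singleton hx0, finrank_span_singleton hy0] at e
    rw [show ({x, y} : Set A) = insert x {y} from rfl, Submodule.span_insert]
    omega
  -- the powers of x
  set p : ℕ → A := fun k => Nat.rec x (fun _ ih => M.mul x ih) k with hp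
  have hp0 : p 0 = x := rfl
  have hp1e : p 1 = M.mul x x := rfl
  have hpsucc : ∀ k, p (k + 1) = M.mul x (p k) := fun k => rfl
  have hpmem : ∀ k, p k ∈ Ag (k + 1) := by
    intro k
    induction k with
    | zero => exact hx1
    | succ k ih =>
      have := hg.mul_mem 1 (k + 1) x (p k) hx1 ih
      rw [hpsucc k]
      rwa [show 1 + (k + 1) = k + 1 + 1 by omega] at this
  have hpx : ∀ k, M.mul (p k) x = ((k + 1 : ℕ) : ℂ) • p (k + 1) := by
    intro k
    induction k with
    | zero => rw [hp0, hpsucc 0, hp0]; simp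
    | succ k ih =>
      rw [hpsucc k, M.zinbiel x (p k) x, ih, map_smul, ← hpsucc k, ← hpsucc (k + 1)]
      push_cast
      module
  by_cases hc : ∀ j, 1 ≤ j → j ≤ r - 2 → p j ≠ 0
  · -- case 1 : all powers survive up to degree r - 1
    have hw0 : p (r - 2) ≠ 0 := hc (r - 2) (by omega) le_rfl
    have hwAg : p (r - 2) ∈ Ag (r - 1) := by
      have := hpmem (r - 2)
      rwa [show r - 2 + 1 = r - 1 by omega] at this
    have hAgr1 : Ag (r - 1) = Submodule.span ℂ {p (r - 2)} :=
      hspan (r - 1) (p (r - 2)) (by omega) (by omega) (by omega) hwAg hw0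
    have hyp : M.mul y (p (r - 3)) ∈ Ag (r - 1) := by
      have hmem : p (r - 3) ∈ Ag (r - 2) := by
        have := hpmem (r - 3)
        rwa [show r - 3 + 1 = r - 2 by omega] at this
      have := hg.mul_mem 1 (r - 2) y (p (r - 3)) hy1 hmem
      rwa [show 1 + (r - 2) = r - 1 by omega] at this
    obtain ⟨γ, hγ⟩ := Submodule.mem_span_singleton.mp (hAgr1 ▸ hyp)
    have hz := M.zinbiel y (p (r - 3)) x
    have hr32 : r - 3 + 1 = r - 2 := by omega
    rw [← hγ, hpx (r - 3), hr32, ← hpsucc (r - 3), hr32] at hz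
    -- hz : M.mul (γ • p (r-2)) x = M.mul y ((r-2 : ℂ) • p (r-2)) + M.mul y (p (r-2))
    rw [map_smul, LinearMap.smul_apply, hpx (r - 2), map_smul] at hz
    have hcne : ((r - 2 : ℕ) : ℂ) + 1 ≠ 0 := by
      have : ((r - 2 : ℕ) : ℂ) + 1 = ((r - 1 : ℕ) : ℂ) := by
        push_cast [show r - 1 = (r - 2) + 1 by omega]
        ring
      rw [this]
      simp only [ne_eq, Nat.cast_eq_zero]
      omega
    have hkey : M.mul y (p (r - 2)) = γ • M.mul x (p (r - 2)) := by
      have e : (((r - 2 : ℕ) : ℂ) + 1) • M.mul y (p (r - 2)) =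
          (((r - 2 : ℕ) : ℂ) + 1) • (γ • M.mul x (p (r - 2))) := by
        rw [add_smul, one_smul, ← hz, ← hpsucc (r - 2), smul_smul, smul_smul]
        congr 1
        push_cast
        ring
      exact smul_right_injective A hcne e
    have hAgr : Ag r = Submodule.map₂ M.mul (Ag 1) (Ag (r - 1)) := by
      have := hAgsucc (r - 1) (by omega) (by omega)
      rwa [show r - 1 + 1 = r by omega] at this
    have hler : Ag r ≤ Submodule.span ℂ {M.mul x (p (r - 2))} := by
      rw [hAgr, hxyspan, hAgr1, Submodule.map₂_span_span]
      apply Submodule.span_le.mpr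
      rintro z ⟨a, ha, b, rfl, rfl⟩
      show M.mul a (p (r - 2)) ∈ _
      rcases ha with rfl | rfl
      · exact Submodule.subset_span rfl
      · rw [hkey]
        exact Submodule.smul_mem _ _ (Submodule.subset_span rfl)
    have : Module.finrank ℂ (Ag r) ≤ 1 := by
      rcases eq_or_ne (M.mul x (p (r - 2))) 0 with h0 | h0
      · rw [h0, Submodule.span_zero_singleton] at hler
        have h' := Submodule.finrank_mono hler
        simp only [finrank_bot] at h'
        omega
      · have h' := Submodule.finrank_mono hler
        rwa [finrank_span_singleton h0] at h'
    omega
  · -- case 2 : the powers of x die before degree r - 1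
    push_neg at hc
    obtain ⟨j0, hj01, hj02, hj03⟩ := hc
    have hex : ∃ j, 1 ≤ j ∧ j ≤ r - 2 ∧ p j = 0 := ⟨j0, hj01, hj02, hj03⟩
    set m := Nat.find hex with hm
    obtain ⟨hm1, hm2, hm3⟩ := Nat.find_spec hex
    rw [← hm] at hm1 hm2 hm3
    have hmin : ∀ j, j < m → 1 ≤ j → j ≤ r - 2 → p j ≠ 0 := by
      intro j hj hj1 hj2 hj0
      exact Nat.find_min hex hj ⟨hj1, hj2, hj0⟩
    have hm2' : 2 ≤ m := by
      rcases Nat.lt_or_ge m 2 with h | h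
      · exfalso
        have hm1'' : m = 1 := by omega
        rw [hm1'', hp1e] at hm3
        exact hxx hm3
      · exact h
    -- Ag 2 is spanned by x∘x
    have hp1mem : p 1 ∈ Ag 2 := hpmem 1
    have hp1ne : p 1 ≠ 0 := hmin 1 (by omega) le_rfl (by omega)
    have hAg2 : Ag 2 = Submodule.span ℂ {p 1} :=
      hspan 2 (p 1) le_rfl (by omega) (by omega) hp1mem hp1ne
    -- Ag m is spanned by p (m-1)
    have hpmmem : p (m - 1) ∈ Ag m := by
      have := hpmem (m - 1)
      rwa [show m - 1 + 1 = m by omega] at this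
    have hpmne : p (m - 1) ≠ 0 := hmin (m - 1) (by omega) (by omega) (by omega)
    have hAgm : Ag m = Submodule.span ℂ {p (m - 1)} :=
      hspan m (p (m - 1)) hm2' (by omega) (by omega) hpmmem hpmne
    have hxAgm : ∀ z ∈ Ag m, M.mul x z = 0 := by
      intro z hz
      rw [hAgm] at hz
      obtain ⟨c, rfl⟩ := Submodule.mem_span_singleton.mp hz
      rw [map_smul, ← hpsucc (m - 1), show m - 1 + 1 = m by omega, hm3, smul_zero]
    -- the inductive invariant
    have key : ∀ k, m ≤ k → k ≤ r - 1 → ∃ w, w ∈ Ag k ∧ w ≠ 0 ∧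
        Ag k = Submodule.span ℂ {w} ∧ M.mul x w = 0 ∧ M.mul w x = 0 ∧
        M.mul w y = ((k - m : ℕ) : ℂ) • M.mul y w := by
      intro k hk
      induction k, hk using Nat.le_induction with
      | base =>
        intro _
        refine ⟨p (m - 1), hpmmem, hpmne, hAgm, ?_, ?_, ?_⟩
        · rw [← hpsucc (m - 1), show m - 1 + 1 = m by omega]
          exact hm3
        · rw [hpx (m - 1), show m - 1 + 1 = m by omega, hm3, smul_zero]
        · have hm21 : m - 2 + 1 = m - 1 := by omega
          have hw : p (m - 1) = M.mul x (p (m - 2)) := by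
            rw [← hpsucc (m - 2), hm21]
          have hz := M.zinbiel x (p (m - 2)) y
          rw [← hw] at hz
          have hmem1 : M.mul (p (m - 2)) y ∈ Ag m := by
            have hmm : p (m - 2) ∈ Ag (m - 1) := by
              have := hpmem (m - 2)
              rwa [hm21] at this
            have := hg.mul_mem (m - 1) 1 (p (m - 2)) y hmm hy1
            rwa [show m - 1 + 1 = m by omega] at this
          have hmem2 : M.mul y (p (m - 2)) ∈ Ag m := by
            have hmm : p (m - 2) ∈ Ag (m - 1) := by
              have := hpmem (m - 2)
              rwa [hm21] at this
            have := hg.mul_mem 1 (m - 1) y (p (m - 2)) hy1 hmm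
            rwa [show 1 + (m - 1) = m by omega] at this
          rw [hz, hxAgm _ hmem1, hxAgm _ hmem2]
          simp
      | succ k hk ih =>
        intro hk1
        obtain ⟨w, hwAg, hw0, hwspan, hxw, hwx, hwy⟩ := ih (by omega)
        set u := M.mul y w with hu
        have huAg : u ∈ Ag (k + 1) := by
          have := hg.mul_mem 1 k y w hy1 hwAg
          rwa [show 1 + k = k + 1 by omega] at this
        have hspannext : Ag (k + 1) = Submodule.span ℂ {u} := by
          have e := hAgsucc k (by omega) (by omega)
          rw [hxyspan, hwspan, Submodule.map₂_span_span] at e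
          have himg : Set.image2 (fun a b => M.mul a b) ({x, y} : Set A) {w} =
              {M.mul x w, M.mul y w} := by
            ext z
            simp only [Set.mem_image2, Set.mem_insert_iff, Set.mem_singleton_iff]
            constructor
            · rintro ⟨a, (rfl | rfl), b, rfl, rfl⟩
              · left; rfl
              · right; rfl
            · rintro (rfl | rfl)
              · exact ⟨x, Or.inl rfl, w, rfl, rfl⟩
              · exact ⟨y, Or.inr rfl, w, rfl, rfl⟩
          rw [himg, hxw] at e
          rwa [Submodule.span_insert_zero] at e
        have hu0 : u ≠ 0 := by
          intro h
          rw [h, Submodule.span_zero_singleton] at hspannext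
          have := hpos (k + 1) (by omega) (by omega)
          simp only [hF] at this
          rw [hspannext, finrank_bot] at this
          omega
        have hux : M.mul u x = 0 := by
          rw [hu, M.zinbiel y w x, hwx, hxw, map_zero, add_zero]
        have hxu : M.mul x u = 0 := by
          have hxyAg2 : M.mul x y ∈ Ag 2 := hg.mul_mem 1 1 x y hx1 hy1
          obtain ⟨c, hc2⟩ := Submodule.mem_span_singleton.mp (hAg2 ▸ hxyAg2)
          have hp1w : M.mul (p 1) w = 0 := by
            have h' := M.zinbiel x x w
            rw [hxw, hwx] at h'
            simp only [map_zero, add_zero] at h'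
            rw [hp1e]
            exact h'
          have hz := M.zinbiel x y w
          rw [← hc2, map_smul, LinearMap.smul_apply, hp1w, smul_zero] at hz
          rw [hwy, map_smul, ← hu] at hz
          have : (1 + ((k - m : ℕ) : ℂ)) • M.mul x u = 0 := by
            rw [add_smul, one_smul]
            exact hz.symm
          have hne : (1 + ((k - m : ℕ) : ℂ)) ≠ 0 := by
            have : (1 + ((k - m : ℕ) : ℂ)) = ((k - m + 1 : ℕ) : ℂ) := by push_cast; ring
            rw [this]
            exact Nat.cast_ne_zero.mpr (by omega)
          exact (smul_eq_zero.mp this).resolve_left hne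
        have huy : M.mul u y = ((k + 1 - m : ℕ) : ℂ) • M.mul y u := by
          rw [hu, M.zinbiel y w y, hwy, map_smul, ← hu]
          rw [show ((k + 1 - m : ℕ) : ℂ) = ((k - m : ℕ) : ℂ) + 1 by
            push_cast [show k + 1 - m = (k - m) + 1 by omega]; ring]
          rw [add_smul, one_smul]
        exact ⟨u, huAg, hu0, hspannext, hxu, hux, huy⟩
    -- conclude
    obtain ⟨w, hwAg, hw0, hwspan, hxw, hwx, hwy⟩ := key (r - 1) (by omega) le_rfl
    have hAgr : Ag r = Submodule.map₂ M.mul (Ag 1) (Ag (r - 1)) := by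
      have := hAgsucc (r - 1) (by omega) (by omega)
      rwa [show r - 1 + 1 = r by omega] at this
    have hspanr : Ag r = Submodule.span ℂ {M.mul y w} := by
      rw [hAgr, hxyspan, hwspan, Submodule.map₂_span_span]
      have himg : Set.image2 (fun a b => M.mul a b) ({x, y} : Set A) {w} =
          {M.mul x w, M.mul y w} := by
        ext z
        simp only [Set.mem_image2, Set.mem_insert_iff, Set.mem_singleton_iff]
        constructor
        · rintro ⟨a, (rfl | rfl), b, rfl, rfl⟩
          · left; rfl
          · right; rfl
        · rintro (rfl | rfl)
          · exact ⟨x, Or.inl rfl, w, rfl, rfl⟩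
          · exact ⟨y, Or.inr rfl, w, rfl, rfl⟩
      rw [himg, hxw, Submodule.span_insert_zero]
    have : Module.finrank ℂ (Ag r) ≤ 1 := by
      rcases eq_or_ne (M.mul y w) 0 with h0 | h0
      · rw [hspanr, h0, Submodule.span_zero_singleton, finrank_bot]
        omega
      · rw [hspanr, finrank_span_singleton h0]
    omega

end ZinbielStr
end
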